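/- arXiv:2007.04605 — 3 statements merged into one kernel-verified Lean document; each statement's English description precedes it below -/
import Mathlib

section
/- Let r > 0, let C ⊂ ℝ^d be a bounded r-prox-regular set, and let 𝒞 = {ρ ∈ P₂(ℝ^d) : supp ρ ⊂ C}. Let θ ∈ P₂(ℝ^d) satisfy supp θ ⊂ C + r·B°, where B° is the open unit ball. Then there exists θ_C ∈ 𝒞 such that W₂(θ, θ_C) = inf_{ρ∈𝒞} W₂(θ, ρ); moreover θ_C is unique and is given by θ_C = (P_C)♯θ, the pushforward of θ by the metric projection P_C onto C. -/
open MeasureTheory Filter Metric Set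
open scoped Topology ENNReal NNReal RealInnerProductSpace

noncomputable section

abbrev Rd (d : ℕ) := EuclideanSpace ℝ (Fin d)

namespace MSP

variable {d : ℕ}

/-- The topological support of a measure. -/
def msupport {α : Type*} [TopologicalSpace α] {mα : MeasurableSpace α} (μ : Measure α) :
    Set α :=
  {x | ∀ U : Set α, IsOpen U → x ∈ U → 0 < μ U}

/-- `π` is a transport plan (coupling) between `μ` and `ν`. -/
def IsCoupling (π : Measure (Rd d × Rd d)) (μ ν : Measure (Rd d)) : Prop :=
  π.map Prod.fst = μ ∧ π.map Prod.snd = ν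

/-- The quadratic transport cost of a plan. -/
def cost2 (π : Measure (Rd d × Rd d)) : ℝ≥0∞ :=
  ∫⁻ p, (‖p.1 - p.2‖₊ : ℝ≥0∞) ^ 2 ∂π

/-- The squared quadratic Wasserstein distance (as an extended real). -/
def W2sq (μ ν : Measure (Rd d)) : ℝ≥0∞ :=
  sInf {c | ∃ π : Measure (Rd d × Rd d), IsCoupling π μ ν ∧ c = cost2 π}

/-- The quadratic Wasserstein distance. -/
def W2 (μ ν : Measure (Rd d)) : ℝ :=
  Real.sqrt (W2sq μ ν).toReal

/-- An optimal transport plan for the quadratic cost. -/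
def IsOptimalPlan (π : Measure (Rd d × Rd d)) (μ ν : Measure (Rd d)) : Prop :=
  IsCoupling π μ ν ∧ cost2 π = W2sq μ ν

def HasFiniteSecondMoment (μ : Measure (Rd d)) : Prop :=
  ∫⁻ x, (‖x‖₊ : ℝ≥0∞) ^ 2 ∂μ < ⊤

/-- `μ` belongs to the Wasserstein space `P₂(ℝ^d)`. -/
def IsP2 (μ : Measure (Rd d)) : Prop :=
  IsProbabilityMeasure μ ∧ HasFiniteSecondMoment μ

/-- The set of nearest points of `S` to `x` (metric projection set). -/
def projSet {E : Type*} [MetricSpace E] (S : Set E) (x : E) : Set E :=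
  {a | a ∈ S ∧ dist x a = infDist x S}

/-- `S` is `r`-prox-regular: the metric projection onto `S` is single-valued and
continuous on the open `r`-neighborhood of `S`. -/
def IsProxRegular {E : Type*} [MetricSpace E] (r : ℝ) (S : Set E) : Prop :=
  IsClosed S ∧ ∃ P : E → E,
    (∀ x, infDist x S < r → projSet S x = {P x}) ∧
    ContinuousOn P {x | infDist x S < r}

/-- The proximal normal cone to `S` at `x`. -/
def proxNormalCone {E : Type*} [NormedAddCommGroup E] [InnerProductSpace ℝ E]
    (S : Set E) (x : E) : Set E :=
  {v | ∃ σ : ℝ, 0 ≤ σ ∧ ∀ y ∈ S, ⟪v, y - x⟫ ≤ σ * ‖y - x‖ ^ 2}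

/-- Assumption (A₁) on the nonlocal vector field `𝒱`. -/
def A1 (L : ℝ) (V : Measure (Rd d) → Rd d → Rd d) : Prop :=
  (∀ μ ν : Measure (Rd d), IsP2 μ → IsP2 ν → ∀ x, ‖V μ x - V ν x‖ ≤ L * W2 μ ν) ∧
  (∀ μ : Measure (Rd d), IsP2 μ → ∀ x y, ‖V μ x - V μ y‖ ≤ L * ‖x - y‖) ∧
  (∀ μ : Measure (Rd d), IsP2 μ → ∀ x, ‖V μ x‖ ≤ L) ∧
  (∀ μ : Measure (Rd d), IsP2 μ → Continuous (V μ))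

/-- Assumption (A₂) on the moving viability set `𝐂`. -/
def A2 (T M r : ℝ) (C : ℝ → Set (Rd d)) : Prop :=
  (∀ s ∈ Icc (0:ℝ) T, ∀ t ∈ Icc (0:ℝ) T, hausdorffDist (C s) (C t) ≤ M * |s - t|) ∧
  ∀ t ∈ Icc (0:ℝ) T, IsCompact (C t) ∧ (C t).Nonempty ∧ IsProxRegular r (C t)

/-- `(ρ, v)` solves the continuity equation `∂ₜρ + ∇·(vρ) = 0` on `(0,T)×ℝ^d` in
the sense of distributions. -/
def IsContEqSol (T : ℝ) (ρ : ℝ → Measure (Rd d)) (v : ℝ → Rd d → Rd d) : Prop :=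
  ∀ φ : ℝ → Rd d → ℝ,
    ContDiff ℝ ((⊤ : ℕ∞) : WithTop ℕ∞) (fun p : ℝ × Rd d => φ p.1 p.2) →
    HasCompactSupport (fun p : ℝ × Rd d => φ p.1 p.2) →
    tsupport (fun p : ℝ × Rd d => φ p.1 p.2) ⊆ Ioo (0:ℝ) T ×ˢ (univ : Set (Rd d)) →
    ∫ t in Ioo (0:ℝ) T,
      ∫ x, (deriv (fun s => φ s x) t + ⟪v t x, gradient (φ t) x⟫) ∂(ρ t) = 0

/-- `ρ` is an absolutely continuous curve in `P₂(ℝ^d)` on `[0,T]`. -/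
def IsAbsCont (T : ℝ) (ρ : ℝ → Measure (Rd d)) : Prop :=
  ∃ g : ℝ → ℝ, IntegrableOn g (Icc (0:ℝ) T) ∧
    ∀ s t : ℝ, 0 ≤ s → s ≤ t → t ≤ T → W2 (ρ s) (ρ t) ≤ ∫ τ in Ioc s t, g τ

/-- `ρ` (with Borel velocity field `v`) is a solution of the measure sweeping
process driven by `𝐂` with perturbation `𝒱`. -/
def IsMSPSol (T : ℝ) (V : Measure (Rd d) → Rd d → Rd d) (C : ℝ → Set (Rd d))
    (ρ : ℝ → Measure (Rd d)) (v : ℝ → Rd d → Rd d) : Prop :=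
  (∀ t ∈ Icc (0:ℝ) T, IsP2 (ρ t)) ∧
  IsAbsCont T ρ ∧
  Measurable (fun p : ℝ × Rd d => v p.1 p.2) ∧
  IsContEqSol T ρ v ∧
  (∀ᵐ t ∂(volume.restrict (Icc (0:ℝ) T)),
    ∀ᵐ x ∂(ρ t), V (ρ t) x - v t x ∈ proxNormalCone (C t) x) ∧
  ∀ t ∈ Icc (0:ℝ) T, msupport (ρ t) ⊆ C t

/-- The graph of the set-valued map `𝐂`, as a subset of the euclidean product
`ℝ ×₂ ℝ^d`. -/
def graphSet (T : ℝ) (C : ℝ → Set (Rd d)) : Set (WithLp 2 (ℝ × Rd d)) :=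
  {p | (WithLp.equiv 2 (ℝ × Rd d) p).1 ∈ Icc (0:ℝ) T ∧
       (WithLp.equiv 2 (ℝ × Rd d) p).2 ∈ C ((WithLp.equiv 2 (ℝ × Rd d) p).1)}

/-- Continuity of a curve of measures with respect to `W₂`, on `[0,T]`. -/
def W2ContinuousOn (T : ℝ) (ρ : ℝ → Measure (Rd d)) : Prop :=
  ∀ t₀ ∈ Icc (0:ℝ) T, ∀ ε > (0:ℝ), ∃ δ > (0:ℝ),
    ∀ t ∈ Icc (0:ℝ) T, |t - t₀| < δ → W2 (ρ t) (ρ t₀) < ε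

end MSP

open MSP

namespace MSPAux
open MSP

variable {α : Type*} [TopologicalSpace α] {mα : MeasurableSpace α}

lemma compl_msupport_eq (μ : Measure α) :
    (msupport μ)ᶜ = ⋃₀ {U : Set α | IsOpen U ∧ μ U = 0} := by
  ext x
  simp only [mem_compl_iff, msupport, mem_setOf_eq, mem_sUnion]
  constructor
  · intro h
    push_neg at h
    obtain ⟨U, hU, hxU, hle⟩ := h
    exact ⟨U, ⟨hU, le_antisymm hle zero_le⟩, hxU⟩
  · rintro ⟨U, ⟨hU, h0⟩, hx⟩
    intro h
    have := h U hU hx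
    rw [h0] at this
    exact lt_irrefl 0 this

lemma measure_compl_msupport [SecondCountableTopology α] (μ : Measure α) :
    μ (msupport μ)ᶜ = 0 := by
  rw [compl_msupport_eq]
  obtain ⟨T, hTc, hTsub, hTeq⟩ :=
    TopologicalSpace.isOpen_sUnion_countable {U : Set α | IsOpen U ∧ μ U = 0}
      (fun U hU => hU.1)
  rw [← hTeq, sUnion_eq_biUnion]
  exact (measure_biUnion_null_iff hTc).mpr fun U hU => (hTsub hU).2

lemma nnnorm_sq_eq_ofReal {E : Type*} [NormedAddCommGroup E] (v : E) :
    (‖v‖₊ : ℝ≥0∞) ^ 2 = ENNReal.ofReal (‖v‖ ^ 2) := by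
  rw [ENNReal.ofReal_pow (norm_nonneg v), ofReal_norm, enorm_eq_nnnorm]

end MSPAux


/-- Lemma (projection of a measure onto a prox-regular set: existence,
uniqueness, and the formula `θ_C = (P_C)♯θ`). -/
theorem stmt5 {d : ℕ} (r : ℝ) (hr : 0 < r) (C : Set (Rd d))
    (hCb : Bornology.IsBounded C) (hC : IsProxRegular r C)
    (θ : Measure (Rd d)) (hθ : IsP2 θ)
    (hθsupp : msupport θ ⊆ Metric.thickening r C)
    (P : Rd d → Rd d)
    (hP : ∀ x, infDist x C < r → projSet C x = {P x})
    (hPc : ContinuousOn P {x | infDist x C < r}) :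
    (IsP2 (θ.map P) ∧ msupport (θ.map P) ⊆ C) ∧
    W2 θ (θ.map P) =
      sInf {c : ℝ | ∃ μ : Measure (Rd d), IsP2 μ ∧ msupport μ ⊆ C ∧ c = W2 θ μ} ∧
    ∀ μ : Measure (Rd d), IsP2 μ → msupport μ ⊆ C →
      W2 θ μ = W2 θ (θ.map P) → μ = θ.map P := by
    classical
  obtain ⟨hθprob, hθ2⟩ := hθ
  haveI := hθprob
  have hCclosed : IsClosed C := hC.1
  have hnsq := fun v : Rd d => MSPAux.nnnorm_sq_eq_ofReal v
  -- the support of θ is nonempty, hence C is nonempty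
  have hsuppne : (msupport θ).Nonempty := by
    by_contra h
    rw [not_nonempty_iff_eq_empty] at h
    have h0 := MSPAux.measure_compl_msupport θ
    rw [h, compl_empty] at h0
    exact one_ne_zero (by rw [← measure_univ (μ := θ), h0])
  have hCne : C.Nonempty := by
    obtain ⟨x, hx⟩ := hsuppne
    obtain ⟨z, hz, -⟩ := Metric.mem_thickening_iff.mp (hθsupp hx)
    exact ⟨z, hz⟩
  set U : Set (Rd d) := {x : Rd d | infDist x C < r} with hUdef
  have hUopen : IsOpen U := isOpen_lt (continuous_infDist_pt C) continuous_const
  have hUmeas := hUopen.measurableSet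
  have hsuppU : msupport θ ⊆ U := fun x hx =>
    (mem_thickening_iff_infDist_lt hCne).mp (hθsupp hx)
  have hθUc : θ Uᶜ = 0 :=
    measure_mono_null (compl_subset_compl.mpr hsuppU) (MSPAux.measure_compl_msupport θ)
  have hUae : ∀ᵐ x ∂θ, x ∈ U := by
    rw [ae_iff]
    exact hθUc
  have hPmem : ∀ x ∈ U, P x ∈ C ∧ dist x (P x) = infDist x C := by
    intro x hx
    have h1 : P x ∈ projSet C x := by rw [hP x hx]; exact rfl
    exact h1
  have hproj_eq : ∀ x ∈ U, ∀ y ∈ C, dist x y = infDist x C → y = P x := by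
    intro x hx y hy hxy
    have h1 : y ∈ projSet C x := ⟨hy, hxy⟩
    rw [hP x hx] at h1
    exact h1
  have hPae : AEMeasurable P θ := by
    have h := hPc.aemeasurable (μ := θ) hUmeas
    rwa [Measure.restrict_eq_self_of_ae_mem hUae] at h
  obtain ⟨R, hRC⟩ := hCb.subset_closedBall 0
  have hR0 : 0 ≤ R := by
    obtain ⟨y, hy⟩ := hCne
    have := hRC hy
    rw [mem_closedBall] at this
    exact le_trans dist_nonneg this
  have hUsub : U ⊆ closedBall 0 (R + r) := by
    intro x hx
    obtain ⟨y, hyC, hxy⟩ := (infDist_lt_iff hCne).mp hx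
    have ht := dist_triangle x y (0 : Rd d)
    have hy' := hRC hyC
    rw [mem_closedBall] at hy' ⊢
    linarith
  -- the pushforward measure ν
  set ν : Measure (Rd d) := θ.map P with hνdef
  haveI hνprob : IsProbabilityMeasure ν := Measure.isProbabilityMeasure_map hPae
  have hPC_ae : ∀ᵐ x ∂θ, P x ∈ C := hUae.mono fun x hx => (hPmem x hx).1
  have hνsupp : msupport ν ⊆ C := by
    intro x hx
    by_contra hxC
    have h0 : ν Cᶜ = 0 := by
      rw [hνdef, Measure.map_apply_of_aemeasurable hPae hCclosed.measurableSet.compl]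
      exact ae_iff.mp hPC_ae
    have := hx Cᶜ hCclosed.isOpen_compl hxC
    rw [h0] at this
    exact lt_irrefl 0 this
  have hnn2meas : Measurable fun x : Rd d => (‖x‖₊ : ℝ≥0∞) ^ 2 :=
    measurable_nnnorm.coe_nnreal_ennreal.pow_const 2
  have hν2 : HasFiniteSecondMoment ν := by
    show (∫⁻ x, (‖x‖₊ : ℝ≥0∞) ^ 2 ∂ν) < ⊤
    rw [hνdef, lintegral_map' hnn2meas.aemeasurable hPae]
    calc ∫⁻ x, (‖P x‖₊ : ℝ≥0∞) ^ 2 ∂θ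
        ≤ ∫⁻ _, ENNReal.ofReal (R ^ 2) ∂θ := by
          refine lintegral_mono_ae (hUae.mono fun x hx => ?_)
          rw [hnsq]
          refine ENNReal.ofReal_le_ofReal ?_
          have hb : ‖P x‖ ≤ R := mem_closedBall_zero_iff.mp (hRC (hPmem x hx).1)
          exact pow_le_pow_left₀ (norm_nonneg _) hb 2
      _ < ⊤ := by rw [lintegral_const, measure_univ, mul_one]; exact ENNReal.ofReal_lt_top
  have hνP2 : IsP2 ν := ⟨hνprob, hν2⟩
  -- the function gd and the candidate minimal cost m
  set gd : Rd d → ℝ≥0∞ := fun x => ENNReal.ofReal (infDist x C ^ 2) with hgddef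
  have hgdmeas : Measurable gd :=
    (ENNReal.continuous_ofReal.comp ((continuous_infDist_pt C).pow 2)).measurable
  set m : ℝ≥0∞ := ∫⁻ x, gd x ∂θ with hmdef
  have hgdP : ∀ᵐ x ∂θ, gd x = (‖x - P x‖₊ : ℝ≥0∞) ^ 2 := by
    refine hUae.mono fun x hx => ?_
    rw [hnsq, hgddef]
    simp only
    rw [← (hPmem x hx).2, dist_eq_norm]
  have hmlt : m < ⊤ := by
    calc m ≤ ∫⁻ _, ENNReal.ofReal (r ^ 2) ∂θ := by
          refine lintegral_mono_ae (hUae.mono fun x hx => ?_)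
          exact ENNReal.ofReal_le_ofReal (pow_le_pow_left₀ infDist_nonneg (le_of_lt hx) 2)
      _ < ⊤ := by rw [lintegral_const, measure_univ, mul_one]; exact ENNReal.ofReal_lt_top
  have hmne : m ≠ ⊤ := hmlt.ne
  have hGmeas : Measurable fun p : Rd d × Rd d => (‖p.1 - p.2‖₊ : ℝ≥0∞) ^ 2 :=
    ((measurable_fst.sub measurable_snd).nnnorm.coe_nnreal_ennreal).pow_const 2
  -- the coupling (id, P)♯ θ
  set πP : Measure (Rd d × Rd d) := θ.map (fun x => (x, P x)) with hπPdef
  have hpair : AEMeasurable (fun x : Rd d => (x, P x)) θ := aemeasurable_id.prodMk hPae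
  have hπPfst : πP.map Prod.fst = θ := by
    rw [hπPdef, AEMeasurable.map_map_of_aemeasurable measurable_fst.aemeasurable hpair]
    simp [Function.comp_def]
  have hπPsnd : πP.map Prod.snd = ν := by
    rw [hπPdef, hνdef, AEMeasurable.map_map_of_aemeasurable measurable_snd.aemeasurable hpair]
    rfl
  have hπPcoup : IsCoupling πP θ ν := ⟨hπPfst, hπPsnd⟩
  have hπPcost : cost2 πP = m := by
    rw [cost2, hπPdef, lintegral_map' hGmeas.aemeasurable hpair]
    exact lintegral_congr_ae (hgdP.mono fun x hx => hx.symm)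
  -- the lower bound for the cost of any admissible coupling
  have hlower : ∀ (π : Measure (Rd d × Rd d)) (μ : Measure (Rd d)),
      IsCoupling π θ μ → msupport μ ⊆ C → m ≤ cost2 π := by
    intro π μ hcoup hsupp
    have hfst := hcoup.1
    have hsnd := hcoup.2
    have hμCc : μ Cᶜ = 0 :=
      measure_mono_null (compl_subset_compl.mpr hsupp) (MSPAux.measure_compl_msupport μ)
    have hae2 : ∀ᵐ p : Rd d × Rd d ∂π, p.2 ∈ C := by
      rw [ae_iff]
      have he : {p : Rd d × Rd d | ¬ p.2 ∈ C} = Prod.snd ⁻¹' Cᶜ := rfl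
      rw [he, ← Measure.map_apply measurable_snd hCclosed.measurableSet.compl, hsnd]
      exact hμCc
    have key : ∀ᵐ p : Rd d × Rd d ∂π, gd p.1 ≤ (‖p.1 - p.2‖₊ : ℝ≥0∞) ^ 2 := by
      filter_upwards [hae2] with p h2
      rw [hnsq, ← dist_eq_norm]
      exact ENNReal.ofReal_le_ofReal
        (pow_le_pow_left₀ infDist_nonneg (infDist_le_dist_of_mem h2) 2)
    calc m = ∫⁻ p, gd p.1 ∂π := by
          rw [hmdef, ← hfst, lintegral_map hgdmeas measurable_fst]
      _ ≤ _ := lintegral_mono_ae key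
  -- W2sq facts
  have hW2sq_le : W2sq θ ν ≤ m := by
    rw [W2sq]
    exact hπPcost ▸ sInf_le ⟨πP, hπPcoup, rfl⟩
  have hW2sq_ge : ∀ μ : Measure (Rd d), msupport μ ⊆ C → m ≤ W2sq θ μ := by
    intro μ hsupp
    refine le_sInf ?_
    rintro c ⟨π, hcoup, rfl⟩
    exact hlower π μ hcoup hsupp
  have hW2sqν : W2sq θ ν = m := le_antisymm hW2sq_le (hW2sq_ge ν hνsupp)
  -- finiteness of W2sq θ μ for P2 measures μ
  have hfinite : ∀ μ : Measure (Rd d), IsP2 μ → W2sq θ μ ≠ ⊤ := by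
    intro μ hμ
    haveI := hμ.1
    have hcoup : IsCoupling (θ.prod μ) θ μ := by
      constructor
      · rw [Measure.map_fst_prod, measure_univ, one_smul]
      · rw [Measure.map_snd_prod, measure_univ, one_smul]
    have hpt : ∀ p : Rd d × Rd d,
        (‖p.1 - p.2‖₊ : ℝ≥0∞) ^ 2 ≤ 4 * ((‖p.1‖₊ : ℝ≥0∞) ^ 2 + (‖p.2‖₊ : ℝ≥0∞) ^ 2) := by
      intro p
      have h1 : (‖p.1 - p.2‖₊ : ℝ≥0∞) ≤ (‖p.1‖₊ : ℝ≥0∞) + (‖p.2‖₊ : ℝ≥0∞) := by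
        exact_mod_cast nnnorm_sub_le p.1 p.2
      set a : ℝ≥0∞ := (‖p.1‖₊ : ℝ≥0∞)
      set b : ℝ≥0∞ := (‖p.2‖₊ : ℝ≥0∞)
      calc (‖p.1 - p.2‖₊ : ℝ≥0∞) ^ 2 ≤ (a + b) ^ 2 := pow_le_pow_left₀ zero_le h1 2
        _ ≤ (2 * max a b) ^ 2 := by
            refine pow_le_pow_left₀ zero_le ?_ 2
            rcases le_total a b with h | h
            · calc a + b ≤ b + b := add_le_add_left h b
                _ = 2 * b := (two_mul b).symm
                _ ≤ 2 * max a b := by exact mul_le_mul_right (le_max_right a b) 2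
            · calc a + b ≤ a + a := add_le_add_right h a
                _ = 2 * a := (two_mul a).symm
                _ ≤ 2 * max a b := by exact mul_le_mul_right (le_max_left a b) 2
        _ = 4 * (max a b) ^ 2 := by rw [mul_pow]; norm_num
        _ ≤ 4 * (a ^ 2 + b ^ 2) := by
            refine mul_le_mul_right ?_ 4
            rcases le_total a b with h | h
            · rw [max_eq_right h]; exact le_add_self
            · rw [max_eq_left h]; exact le_self_add
    have hc1 : ∫⁻ p, (‖p.1‖₊ : ℝ≥0∞) ^ 2 ∂(θ.prod μ) = ∫⁻ x, (‖x‖₊ : ℝ≥0∞) ^ 2 ∂θ := by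
      conv_rhs => rw [← hcoup.1]
      rw [lintegral_map hnn2meas measurable_fst]
    have hc2 : ∫⁻ p, (‖p.2‖₊ : ℝ≥0∞) ^ 2 ∂(θ.prod μ) = ∫⁻ x, (‖x‖₊ : ℝ≥0∞) ^ 2 ∂μ := by
      conv_rhs => rw [← hcoup.2]
      rw [lintegral_map hnn2meas measurable_snd]
    have hm1 : Measurable fun p : Rd d × Rd d => (‖p.1‖₊ : ℝ≥0∞) ^ 2 :=
      hnn2meas.comp measurable_fst
    have hm2 : Measurable fun p : Rd d × Rd d => (‖p.2‖₊ : ℝ≥0∞) ^ 2 :=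
      hnn2meas.comp measurable_snd
    have hcost : cost2 (θ.prod μ)
        ≤ 4 * (∫⁻ x, (‖x‖₊ : ℝ≥0∞) ^ 2 ∂θ + ∫⁻ x, (‖x‖₊ : ℝ≥0∞) ^ 2 ∂μ) := by
      calc cost2 (θ.prod μ)
          ≤ ∫⁻ p, 4 * ((‖p.1‖₊ : ℝ≥0∞) ^ 2 + (‖p.2‖₊ : ℝ≥0∞) ^ 2) ∂(θ.prod μ) :=
            lintegral_mono hpt
        _ = 4 * (∫⁻ p, ((‖p.1‖₊ : ℝ≥0∞) ^ 2 + (‖p.2‖₊ : ℝ≥0∞) ^ 2) ∂(θ.prod μ)) := by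
            exact lintegral_const_mul _ (hm1.add hm2)
        _ = 4 * (∫⁻ x, (‖x‖₊ : ℝ≥0∞) ^ 2 ∂θ + ∫⁻ x, (‖x‖₊ : ℝ≥0∞) ^ 2 ∂μ) := by
            rw [lintegral_add_left hm1, hc1, hc2]
    have hfin : 4 * (∫⁻ x, (‖x‖₊ : ℝ≥0∞) ^ 2 ∂θ + ∫⁻ x, (‖x‖₊ : ℝ≥0∞) ^ 2 ∂μ) ≠ ⊤ := by
      refine ENNReal.mul_ne_top (by norm_num) ?_
      exact ENNReal.add_ne_top.mpr ⟨hθ2.ne, hμ.2.ne⟩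
    exact ne_top_of_le_ne_top hfin (le_trans (sInf_le ⟨θ.prod μ, hcoup, rfl⟩) hcost)
  -- part (b): the value of the infimum
  set S : Set ℝ := {c : ℝ | ∃ μ : Measure (Rd d), IsP2 μ ∧ msupport μ ⊆ C ∧ c = W2 θ μ}
    with hSdef
  have hmemS : W2 θ ν ∈ S := ⟨ν, hνP2, hνsupp, rfl⟩
  have hlb : ∀ c ∈ S, W2 θ ν ≤ c := by
    rintro c ⟨μ, hμ, hsupp, rfl⟩
    refine Real.sqrt_le_sqrt ?_
    refine ENNReal.toReal_mono (hfinite μ hμ) ?_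
    rw [hW2sqν]
    exact hW2sq_ge μ hsupp
  have hpartb : W2 θ ν = sInf S := by
    refine le_antisymm (le_csInf ⟨_, hmemS⟩ hlb) (csInf_le ?_ hmemS)
    refine ⟨0, ?_⟩
    rintro c ⟨μ, hμ, hsupp, rfl⟩
    exact Real.sqrt_nonneg _
  -- part (c): uniqueness
  have huniq : ∀ μ : Measure (Rd d), IsP2 μ → msupport μ ⊆ C → W2 θ μ = W2 θ ν → μ = ν := by
    intro μ hμ hμsupp hW2eq
    haveI hμprob := hμ.1
    have hμsq : W2sq θ μ = m := by
      have h1 : (W2sq θ μ).toReal = (W2sq θ ν).toReal := by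
        calc (W2sq θ μ).toReal = (W2 θ μ) ^ 2 := by
              rw [W2, Real.sq_sqrt ENNReal.toReal_nonneg]
          _ = (W2 θ ν) ^ 2 := by rw [hW2eq]
          _ = (W2sq θ ν).toReal := by rw [W2, Real.sq_sqrt ENNReal.toReal_nonneg]
      have h2 := (ENNReal.toReal_eq_toReal_iff' (hfinite μ hμ) (hfinite ν hνP2)).mp h1
      rw [h2, hW2sqν]
    have hCcomp : IsCompact C := Metric.isCompact_of_isClosed_isBounded hCclosed hCb
    -- the key step: equality of integrals of bounded continuous functions
    have hkey : ∀ f : BoundedContinuousFunction (Rd d) ℝ, ∫ x, f x ∂μ = ∫ x, f x ∂ν := by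
      intro f
      set M : ℝ := ‖f‖ + 1 with hMdef
      have hM0 : 0 < M := lt_of_le_of_lt (norm_nonneg f) (lt_add_one _)
      have hfM : ∀ x, |f x| ≤ M := fun x =>
        le_trans (f.norm_coe_le_norm x) (le_add_of_nonneg_right zero_le_one)
      have habs : ∀ c : ℝ, 0 < c → |∫ x, f x ∂μ - ∫ x, f x ∂ν| ≤ c := by
        intro c hc
        -- uniform continuity of f on the compact set C
        obtain ⟨δ, hδ0, hδ⟩ := (Metric.uniformContinuousOn_iff.mp
          (hCcomp.uniformContinuousOn_of_continuous f.continuous.continuousOn)) (c / 3)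
          (by positivity)
        -- choose the tail parameter δ'
        set τ : ℝ := c / (12 * M) with hτ
        have hτ0 : 0 < τ := by positivity
        have htail : ∃ n : ℕ, θ {x : Rd d | r - 1 / (n + 1 : ℝ) < infDist x C}
            < ENNReal.ofReal τ := by
          have hAmeas : ∀ n : ℕ,
              MeasureTheory.NullMeasurableSet {x : Rd d | r - 1 / (n + 1 : ℝ) < infDist x C} θ :=
            fun n => (measurableSet_lt measurable_const
              (continuous_infDist_pt C).measurable).nullMeasurableSet
          have hanti : Antitone fun n : ℕ => {x : Rd d | r - 1 / (n + 1 : ℝ) < infDist x C} := by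
            intro a b hab x hx
            simp only [mem_setOf_eq] at hx ⊢
            have hb1 : (0 : ℝ) < a + 1 := by positivity
            have h1 : 1 / (b + 1 : ℝ) ≤ 1 / (a + 1 : ℝ) := by
              refine one_div_le_one_div_of_le hb1 ?_
              have : (a : ℝ) ≤ b := Nat.cast_le.mpr hab
              linarith
            linarith
          have hint : (⋂ n : ℕ, {x : Rd d | r - 1 / (n + 1 : ℝ) < infDist x C}) ⊆ Uᶜ := by
            intro x hx
            simp only [mem_iInter, mem_setOf_eq] at hx
            intro hxU
            have hxU' : infDist x C < r := hxU
            obtain ⟨n, hn⟩ := exists_nat_one_div_lt (sub_pos.mpr hxU')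
            have := hx n
            linarith
          have h0 : θ (⋂ n : ℕ, {x : Rd d | r - 1 / (n + 1 : ℝ) < infDist x C}) = 0 :=
            measure_mono_null hint hθUc
          have htd := tendsto_measure_iInter_atTop hAmeas hanti ⟨0, measure_ne_top θ _⟩
          rw [h0] at htd
          have hev := htd.eventually_lt_const
            (show (0 : ℝ≥0∞) < ENNReal.ofReal τ by simpa using hτ0)
          exact hev.exists
        obtain ⟨n, hn⟩ := htail
        set δ' : ℝ := 1 / (n + 1 : ℝ) with hδ'def
        have hδ'0 : 0 < δ' := by positivity
        set K : Set (Rd d) := {x : Rd d | infDist x C ≤ r - δ'} ∩ closedBall 0 (R + r)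
          with hKdef
        have hKclosed : IsClosed K :=
          (isClosed_le (continuous_infDist_pt C) continuous_const).inter isClosed_closedBall
        have hKcomp : IsCompact K := (isCompact_closedBall (0 : Rd d) (R + r)).inter_left
          (isClosed_le (continuous_infDist_pt C) continuous_const)
        have hKU : K ⊆ U := fun x hx => by
          have h1 : infDist x C ≤ r - δ' := hx.1
          show infDist x C < r
          linarith
        -- the continuous cost-gap function F
        set F : Rd d × Rd d → ℝ := fun p => ‖p.1 - p.2‖ ^ 2 - infDist p.1 C ^ 2 with hFdef
        have hFcont : Continuous F := by
          refine Continuous.sub ?_ ?_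
          · exact (continuous_fst.sub continuous_snd).norm.pow 2
          · exact ((continuous_infDist_pt C).comp continuous_fst).pow 2
        -- the compactness claim
        have hclaim : ∃ ε₀ : ℝ, 0 < ε₀ ∧ ∀ x ∈ K, ∀ y ∈ C, F (x, y) < ε₀ →
            dist y (P x) < δ := by
          have hφ : ContinuousOn (fun p : Rd d × Rd d => dist p.2 (P p.1)) (K ×ˢ C) := by
            have h1 : ContinuousOn (fun p : Rd d × Rd d => P p.1) (K ×ˢ C) :=
              hPc.comp continuous_fst.continuousOn (fun p hp => hKU hp.1)
            exact continuous_dist.comp_continuousOn (continuous_snd.continuousOn.prodMk h1)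
          set Z : Set (Rd d × Rd d) :=
            (K ×ˢ C) ∩ (fun p : Rd d × Rd d => dist p.2 (P p.1)) ⁻¹' (Ici δ) with hZdef
          have hZclosed : IsClosed Z :=
            hφ.preimage_isClosed_of_isClosed (hKclosed.prod hCclosed) isClosed_Ici
          have hZcomp : IsCompact Z :=
            (hKcomp.prod hCcomp).of_isClosed_subset hZclosed inter_subset_left
          by_cases hZne : Z.Nonempty
          · obtain ⟨p₀, hp₀, hmin⟩ := hZcomp.exists_isMinOn hZne hFcont.continuousOn
            obtain ⟨⟨h1, h2⟩, h3⟩ := hp₀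
            have h3' : δ ≤ dist p₀.2 (P p₀.1) := h3
            refine ⟨F p₀, ?_, ?_⟩
            · have hle : infDist p₀.1 C ≤ ‖p₀.1 - p₀.2‖ := by
                rw [← dist_eq_norm]
                exact infDist_le_dist_of_mem h2
              rcases lt_or_eq_of_le hle with hlt | heq
              · have hsq : infDist p₀.1 C ^ 2 < ‖p₀.1 - p₀.2‖ ^ 2 :=
                  pow_lt_pow_left₀ hlt infDist_nonneg (by norm_num)
                simp only [hFdef]
                linarith
              · exfalso
                have hy : p₀.2 = P p₀.1 :=
                  hproj_eq p₀.1 (hKU h1) p₀.2 h2 (by rw [dist_eq_norm, ← heq])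
                rw [hy, dist_self] at h3'
                linarith
            · intro x hx y hy hF
              by_contra hcon
              push_neg at hcon
              have hmem : (x, y) ∈ Z := ⟨⟨hx, hy⟩, hcon⟩
              have := hmin hmem
              exact absurd this (by simp only [Set.mem_setOf_eq]; exact not_le.mpr hF)
          · refine ⟨1, one_pos, ?_⟩
            intro x hx y hy _
            by_contra hcon
            push_neg at hcon
            exact hZne ⟨(x, y), ⟨hx, hy⟩, hcon⟩
        obtain ⟨ε₀, hε₀, hclaim⟩ := hclaim
        -- extract a near-optimal coupling
        set ε : ℝ≥0∞ := ENNReal.ofReal ε₀ * ENNReal.ofReal τ with hεdef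
        have hε0 : ε ≠ 0 := by
          rw [hεdef]
          simp only [ne_eq, mul_eq_zero, ENNReal.ofReal_eq_zero, not_or, not_le]
          exact ⟨hε₀, hτ0⟩
        have hsInflt : W2sq θ μ < m + ε := by
          rw [hμsq]
          exact ENNReal.lt_add_right hmne hε0
        rw [W2sq] at hsInflt
        obtain ⟨cc, hccmem, hcclt⟩ := sInf_lt_iff.mp hsInflt
        obtain ⟨π, hπcoup, rfl⟩ := hccmem
        have hπfst := hπcoup.1
        have hπsnd := hπcoup.2
        haveI hπprob : IsProbabilityMeasure π := by
          constructor
          have hmu := Measure.map_apply (μ := π) measurable_fst MeasurableSet.univ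
          rw [preimage_univ] at hmu
          rw [← hmu, hπfst, measure_univ]
        have hae1 : ∀ᵐ p : Rd d × Rd d ∂π, p.1 ∈ U := by
          rw [ae_iff]
          have he : {p : Rd d × Rd d | ¬ p.1 ∈ U} = Prod.fst ⁻¹' Uᶜ := rfl
          rw [he, ← Measure.map_apply measurable_fst hUmeas.compl, hπfst]
          exact hθUc
        have hμCc : μ Cᶜ = 0 :=
          measure_mono_null (compl_subset_compl.mpr hμsupp) (MSPAux.measure_compl_msupport μ)
        have hae2 : ∀ᵐ p : Rd d × Rd d ∂π, p.2 ∈ C := by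
          rw [ae_iff]
          have he : {p : Rd d × Rd d | ¬ p.2 ∈ C} = Prod.snd ⁻¹' Cᶜ := rfl
          rw [he, ← Measure.map_apply measurable_snd hCclosed.measurableSet.compl, hπsnd]
          exact hμCc
        -- Markov inequality for the cost gap
        have hFmeas : Measurable F := hFcont.measurable
        have hgdfst : ∫⁻ p, gd p.1 ∂π = m := by
          rw [hmdef, ← hπfst, lintegral_map hgdmeas measurable_fst]
        have haeF : ∀ p : Rd d × Rd d,
            ENNReal.ofReal (F p) = (‖p.1 - p.2‖₊ : ℝ≥0∞) ^ 2 - gd p.1 := by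
          intro p
          rw [hFdef]
          simp only
          rw [ENNReal.ofReal_sub _ (sq_nonneg _), hnsq]
        have haege : ∀ᵐ p : Rd d × Rd d ∂π, gd p.1 ≤ (‖p.1 - p.2‖₊ : ℝ≥0∞) ^ 2 := by
          filter_upwards [hae2] with p h2
          rw [hnsq, ← dist_eq_norm]
          exact ENNReal.ofReal_le_ofReal
            (pow_le_pow_left₀ infDist_nonneg (infDist_le_dist_of_mem h2) 2)
        have hFlint : ∫⁻ p, ENNReal.ofReal (F p) ∂π < ε := by
          have he : ∫⁻ p, ENNReal.ofReal (F p) ∂π = cost2 π - m := by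
            have hgdfstmeas : Measurable fun p : Rd d × Rd d => gd p.1 :=
              hgdmeas.comp measurable_fst
            rw [lintegral_congr haeF,
              lintegral_sub hgdfstmeas (by rw [hgdfst]; exact hmne) haege,
              hgdfst]
            rfl
          rw [he]
          have hlow := hlower π μ hπcoup hμsupp
          exact ENNReal.sub_lt_of_lt_add hlow (by rwa [add_comm] at hcclt)
        set bad2 : Set (Rd d × Rd d) := {p | ENNReal.ofReal ε₀ ≤ ENNReal.ofReal (F p)}
          with hbad2def
        have hbad2meas : MeasurableSet bad2 :=
          measurableSet_le measurable_const hFmeas.ennreal_ofReal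
        have hbad2 : π bad2 ≤ ENNReal.ofReal τ := by
          have hml := mul_meas_ge_le_lintegral₀ (hFmeas.ennreal_ofReal.aemeasurable (μ := π))
            (ENNReal.ofReal ε₀)
          have h2 : ENNReal.ofReal ε₀ * π bad2 ≤ ENNReal.ofReal ε₀ * ENNReal.ofReal τ :=
            le_trans hml (le_of_lt hFlint)
          exact (ENNReal.mul_le_mul_iff_right (by simpa using hε₀) ENNReal.ofReal_ne_top).mp h2
        set badK : Set (Rd d × Rd d) := Prod.fst ⁻¹' Kᶜ with hbadKdef
        have hbadK : π badK ≤ ENNReal.ofReal τ := by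
          rw [hbadKdef, ← Measure.map_apply measurable_fst hKclosed.measurableSet.compl, hπfst]
          have hsub : Kᶜ ⊆ {x : Rd d | r - δ' < infDist x C} ∪ (closedBall (0 : Rd d) (R + r))ᶜ := by
            intro x hx
            rw [hKdef, compl_inter] at hx
            rcases hx with hx | hx
            · simp only [mem_compl_iff, mem_setOf_eq] at hx
              exact Or.inl (not_le.mp hx)
            · exact Or.inr hx
          have hball : θ (closedBall (0 : Rd d) (R + r))ᶜ = 0 :=
            measure_mono_null (compl_subset_compl.mpr hUsub) hθUc
          calc θ Kᶜ ≤ θ ({x : Rd d | r - δ' < infDist x C}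
                ∪ (closedBall (0 : Rd d) (R + r))ᶜ) := measure_mono hsub
            _ ≤ θ {x : Rd d | r - δ' < infDist x C}
                + θ (closedBall (0 : Rd d) (R + r))ᶜ := measure_union_le _ _
            _ = θ {x : Rd d | r - δ' < infDist x C} := by rw [hball, add_zero]
            _ ≤ ENNReal.ofReal τ := hn.le
        set bad : Set (Rd d × Rd d) := badK ∪ bad2 with hbaddef
        have hbadmeas : MeasurableSet bad :=
          (hKclosed.measurableSet.compl.preimage measurable_fst).union hbad2meas
        have hbadb : π bad ≤ ENNReal.ofReal (c / (6 * M)) := by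
          have hττ : τ + τ ≤ c / (6 * M) := by
            rw [hτ]
            rw [← add_div]
            rw [div_le_div_iff₀ (by positivity) (by positivity)]
            ring_nf
            nlinarith [hM0, hc]
          calc π bad ≤ π badK + π bad2 := measure_union_le _ _
            _ ≤ ENNReal.ofReal τ + ENNReal.ofReal τ := add_le_add hbadK hbad2
            _ = ENNReal.ofReal (τ + τ) := (ENNReal.ofReal_add hτ0.le hτ0.le).symm
            _ ≤ ENNReal.ofReal (c / (6 * M)) := ENNReal.ofReal_le_ofReal hττ
        -- the pointwise estimate
        have hptwise : ∀ᵐ p : Rd d × Rd d ∂π,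
            |f p.2 - f (P p.1)| ≤ c / 3 + (2 * M) * Set.indicator bad (fun _ => (1 : ℝ)) p := by
          filter_upwards [hae1, hae2] with p h1 h2
          by_cases hpbad : p ∈ bad
          · rw [Set.indicator_of_mem hpbad, mul_one]
            have hb1 := hfM p.2
            have hb2 := hfM (P p.1)
            have h3 : |f p.2 - f (P p.1)| ≤ |f p.2| + |f (P p.1)| := abs_sub _ _
            have hc3 : (0 : ℝ) ≤ c / 3 := by positivity
            linarith
          · rw [Set.indicator_of_notMem hpbad, mul_zero, add_zero]
            have hpK : p.1 ∈ K := by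
              by_contra h
              exact hpbad (Or.inl h)
            have hpF : F p < ε₀ := by
              by_contra h
              push_neg at h
              exact hpbad (Or.inr (ENNReal.ofReal_le_ofReal h))
            have hd : dist p.2 (P p.1) < δ := hclaim p.1 hpK p.2 h2 hpF
            have hPp : P p.1 ∈ C := (hPmem p.1 (hKU hpK)).1
            have hff := hδ p.2 h2 (P p.1) hPp hd
            rw [Real.dist_eq] at hff
            exact le_of_lt hff
        -- integrability
        have hsm1 : AEStronglyMeasurable (fun p : Rd d × Rd d => f p.2) π :=
          (f.continuous.comp continuous_snd).aestronglyMeasurable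
        have hPfst : AEMeasurable (fun p : Rd d × Rd d => P p.1) π := by
          have h1 : AEMeasurable P (π.map Prod.fst) := by rw [hπfst]; exact hPae
          exact h1.comp_aemeasurable measurable_fst.aemeasurable
        have hsm2 : AEStronglyMeasurable (fun p : Rd d × Rd d => f (P p.1)) π :=
          aestronglyMeasurable_iff_aemeasurable.mpr
            (f.continuous.measurable.comp_aemeasurable hPfst)
        have hint1 : Integrable (fun p : Rd d × Rd d => f p.2) π := by
          refine Integrable.mono' (integrable_const M) hsm1 (ae_of_all _ fun p => ?_)
          simpa [Real.norm_eq_abs] using hfM p.2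
        have hint2 : Integrable (fun p : Rd d × Rd d => f (P p.1)) π := by
          refine Integrable.mono' (integrable_const M) hsm2 (ae_of_all _ fun p => ?_)
          simpa [Real.norm_eq_abs] using hfM (P p.1)
        have heq1 : ∫ x, f x ∂μ = ∫ p : Rd d × Rd d, f p.2 ∂π := by
          rw [← hπsnd, integral_map measurable_snd.aemeasurable
            f.continuous.aestronglyMeasurable]
        have hsmθ : AEStronglyMeasurable (fun x => f (P x)) θ :=
          aestronglyMeasurable_iff_aemeasurable.mpr
            (f.continuous.measurable.comp_aemeasurable hPae)
        have heq2 : ∫ x, f x ∂ν = ∫ p : Rd d × Rd d, f (P p.1) ∂π := by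
          rw [hνdef, integral_map hPae f.continuous.aestronglyMeasurable]
          rw [← hπfst] at hsmθ ⊢
          rw [integral_map measurable_fst.aemeasurable hsmθ]
        calc |∫ x, f x ∂μ - ∫ x, f x ∂ν|
            = |∫ p : Rd d × Rd d, (f p.2 - f (P p.1)) ∂π| := by
              rw [heq1, heq2, integral_sub hint1 hint2]
          _ ≤ ∫ p : Rd d × Rd d, |f p.2 - f (P p.1)| ∂π := by
              simpa [Real.norm_eq_abs] using
                norm_integral_le_integral_norm (fun p : Rd d × Rd d => f p.2 - f (P p.1)) (μ := π)
          _ ≤ ∫ p : Rd d × Rd d,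
              (c / 3 + (2 * M) * Set.indicator bad (fun _ => (1 : ℝ)) p) ∂π := by
              refine integral_mono_ae (hint1.sub hint2).abs ?_ hptwise
              exact (integrable_const (c / 3)).add
                (((integrable_const (1 : ℝ)).indicator hbadmeas).const_mul (2 * M))
          _ = c / 3 + (2 * M) * (π bad).toReal := by
              rw [integral_add (integrable_const (c / 3))
                (((integrable_const (1 : ℝ)).indicator hbadmeas).const_mul (2 * M)),
                integral_const, integral_const_mul, integral_indicator_const _ hbadmeas]
              simp [measure_univ, Measure.real]
          _ ≤ c / 3 + (2 * M) * (c / (6 * M)) := by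
              have h1 : (π bad).toReal ≤ c / (6 * M) :=
                ENNReal.toReal_le_of_le_ofReal (by positivity) hbadb
              have h2 : (0 : ℝ) ≤ 2 * M := by positivity
              nlinarith
          _ ≤ c := by
              have h3 : (2 * M) * (c / (6 * M)) = c / 3 := by
                field_simp
                ring
              rw [h3]
              linarith
      by_contra hne
      have h1 : 0 < |∫ x, f x ∂μ - ∫ x, f x ∂ν| := abs_pos.mpr (sub_ne_zero.mpr hne)
      have h2 := habs _ (half_pos h1)
      linarith
    -- conclude equality of measures
    refine ext_of_forall_lintegral_eq_of_IsFiniteMeasure ?_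
    intro f
    have lip : LipschitzWith 1 ((↑) : ℝ≥0 → ℝ) := isometry_subtype_coe.lipschitz
    set g : BoundedContinuousFunction (Rd d) ℝ := BoundedContinuousFunction.comp _ lip f with hgdef2
    have hgf : ∀ x, g x = (f x : ℝ) := fun _ => rfl
    have hint_g_μ : Integrable (fun x => (f x : ℝ)) μ := by
      have := g.integrable μ
      exact this
    have hint_g_ν : Integrable (fun x => (f x : ℝ)) ν := by
      have := g.integrable ν
      exact this
    rw [lintegral_coe_eq_integral _ hint_g_μ, lintegral_coe_eq_integral _ hint_g_ν]
    congr 1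
    have := hkey g
    simpa [hgf] using this
  exact ⟨⟨hνP2, hνsupp⟩, hpartb, fun μ hμ hsupp heq => huniq μ hμ hsupp heq⟩
end
end

section
/- Let T > 0, L > 0, M > 0, r > 0, r' > 0. Let (t,x) ↦ v_t(x) be a time-dependent vector field on [0,T]×ℝ^d which is measurable in t, L-Lipschitz in x, and bounded by L. Let 𝐂 : [0,T] ⇉ ℝ^d satisfy (A2) and suppose the graph of 𝐂, i.e. {(t,x) ∈ [0,T]×ℝ^d : x ∈ 𝐂(t)}, is r'-prox-regular. Let y : [0,T] → ℝ^d be a solution of the perturbed sweeping process ẏ(t) ∈ v_t(y(t)) − N_{𝐂(t)}(y(t)) for a.e. t ∈ [0,T] (in particular y(t) ∈ 𝐂(t) for all t). If t₀ ∈ (0,T) is such that ẏ(t₀) exists, then ξ + ẏ(t₀)·η = 0 for every (ξ,η) in the proximal normal cone N_{graph 𝐂}(t₀, y(t₀)). -/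
open MeasureTheory Filter Metric Set
open scoped Topology ENNReal NNReal RealInnerProductSpace

noncomputable section

open MSP

/-- Proposition (no-flux property of the perturbed sweeping process: the
velocity is tangent to the graph of the moving set). -/
theorem stmt15 {d : ℕ} (T L M r r' : ℝ) (hT : 0 < T) (hL : 0 < L) (hM : 0 < M)
    (hr : 0 < r) (hr' : 0 < r')
    (v : ℝ → Rd d → Rd d)
    (hvm : ∀ x, Measurable (fun t => v t x))
    (hvlip : ∀ t, LipschitzWith (Real.toNNReal L) (v t))
    (hvbdd : ∀ t x, ‖v t x‖ ≤ L)
    (C : ℝ → Set (Rd d)) (hC : A2 T M r C)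
    (hgraph : IsProxRegular r' (graphSet T C))
    (y : ℝ → Rd d)
    (hyC : ∀ t ∈ Icc (0:ℝ) T, y t ∈ C t)
    (hyac : ∃ g : ℝ → ℝ, IntegrableOn g (Icc (0:ℝ) T) ∧
      ∀ s t : ℝ, 0 ≤ s → s ≤ t → t ≤ T → ‖y t - y s‖ ≤ ∫ τ in Ioc s t, g τ)
    (hincl : ∀ᵐ t ∂(volume.restrict (Icc (0:ℝ) T)),
      ∃ y' : Rd d, HasDerivAt y y' t ∧ v t (y t) - y' ∈ proxNormalCone (C t) (y t))
    (t0 : ℝ) (ht0 : t0 ∈ Ioo (0:ℝ) T) (y0' : Rd d) (hy0' : HasDerivAt y y0' t0) :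
    ∀ ξ : ℝ, ∀ η : Rd d,
      (WithLp.equiv 2 (ℝ × Rd d)).symm (ξ, η) ∈
        proxNormalCone (graphSet T C) ((WithLp.equiv 2 (ℝ × Rd d)).symm (t0, y t0)) →
      ξ + ⟪y0', η⟫ = 0 := by
  intro ξ η hmem
  obtain ⟨σ, hσ, hineq⟩ := hmem
  -- auxiliary derivatives
  have hz : HasDerivAt (fun t => y t - y t0) y0' t0 := hy0'.sub_const _
  have hq : HasDerivAt (fun t => (⟪y t - y t0, y t - y t0⟫ : ℝ)) 0 t0 := by
    have h := (hz.inner ℝ hz)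
    simpa using h
  have hlin : HasDerivAt (fun t => ξ * (t - t0) + (⟪η, y t - y t0⟫ : ℝ))
      (ξ + ⟪η, y0'⟫) t0 := by
    have h1 : HasDerivAt (fun t : ℝ => ξ * (t - t0)) (ξ * 1) t0 :=
      ((hasDerivAt_id t0).sub_const t0).const_mul ξ
    have h2 : HasDerivAt (fun t => (⟪η, y t - y t0⟫ : ℝ)) (⟪η, y0'⟫) t0 := by
      have h := (hasDerivAt_const t0 η).inner ℝ hz
      simpa using h
    exact (h1.add h2).congr_deriv (by simp)
  set h : ℝ → ℝ := fun t =>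
    ξ * (t - t0) + (⟪η, y t - y t0⟫ : ℝ) - σ * ((t - t0) ^ 2 + ⟪y t - y t0, y t - y t0⟫)
    with hh_def
  have hh : HasDerivAt h (ξ + ⟪η, y0'⟫) t0 := by
    have hsq : HasDerivAt (fun t : ℝ => (t - t0) ^ 2) (2 * (t0 - t0)) t0 := by
      exact (((hasDerivAt_id t0).sub_const t0).pow 2).congr_deriv (by simp)
    have := hlin.sub (((by simpa using hsq : HasDerivAt (fun t : ℝ => (t - t0) ^ 2) 0 t0).add
      hq).const_mul σ)
    exact this.congr_deriv (by simp)
  -- local max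
  have hmax : IsLocalMax h t0 := by
    have hopen : Ioo (0:ℝ) T ∈ nhds t0 := (isOpen_Ioo).mem_nhds ht0
    filter_upwards [hopen] with t ht
    have htIcc : t ∈ Icc (0:ℝ) T := Ioo_subset_Icc_self ht
    have hYmem : (WithLp.equiv 2 (ℝ × Rd d)).symm (t, y t) ∈ graphSet T C := by
      refine ⟨?_, ?_⟩ <;> simpa [graphSet] using (by
        first
          | exact htIcc
          | exact hyC t htIcc)
    have key := hineq _ hYmem
    have hsub : ((WithLp.equiv 2 (ℝ × Rd d)).symm (t, y t)) -
        ((WithLp.equiv 2 (ℝ × Rd d)).symm (t0, y t0)) =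
        (WithLp.equiv 2 (ℝ × Rd d)).symm (t - t0, y t - y t0) := rfl
    rw [hsub] at key
    have hinner : (⟪(WithLp.equiv 2 (ℝ × Rd d)).symm (ξ, η),
        (WithLp.equiv 2 (ℝ × Rd d)).symm (t - t0, y t - y t0)⟫ : ℝ) =
        ξ * (t - t0) + ⟪η, y t - y t0⟫ := by
      rw [WithLp.prod_inner_apply]
      simp [RCLike.inner_apply]
      ring
    have hnorm : ‖(WithLp.equiv 2 (ℝ × Rd d)).symm (t - t0, y t - y t0)‖ ^ 2 =
        (t - t0) ^ 2 + (⟪y t - y t0, y t - y t0⟫ : ℝ) := by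
      rw [← real_inner_self_eq_norm_sq, WithLp.prod_inner_apply]
      simp [RCLike.inner_apply, sq]
    rw [hinner, hnorm] at key
    have : h t ≤ 0 := by simpa [hh_def] using sub_nonpos.mpr key
    simpa [hh_def] using this
  have := hmax.hasDerivAt_eq_zero hh
  rw [real_inner_comm] at this
  linarith
end
end

section
/- Let r > 0, let Ω ⊂ ℝ^d be compact, and let θ be a Borel probability measure on ℝ^d. Then the family 𝒞 = {C : C is a compact r-prox-regular subset of ℝ^d, C ⊂ Ω, θ(C) = 1} is compact in the space of compact subsets of ℝ^d equipped with the Hausdorff distance: every sequence C_n ∈ 𝒞 has a subsequence converging in Hausdorff distance to some C ∈ 𝒞 (in particular, the Hausdorff limit of compact r-prox-regular subsets of Ω carrying full θ-measure is again r-prox-regular, contained in Ω, and satisfies θ(C) = 1). -/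
open MeasureTheory Filter Metric Set
open scoped Topology ENNReal NNReal RealInnerProductSpace

noncomputable section

open MSP

namespace StmtAux

variable {d : ℕ}

lemma le_infDist' {S : Set (Rd d)} (hS : S.Nonempty) {x : Rd d} {b : ℝ}
    (h : ∀ y ∈ S, b ≤ dist x y) : b ≤ infDist x S := by
  by_contra hb
  push_neg at hb
  obtain ⟨y, hy, hlt⟩ := (infDist_lt_iff hS).1 hb
  exact absurd hlt (not_lt.2 (h y hy))

lemma free_hypo {S : Set (Rd d)} {x p : Rd d} (hp : p ∈ projSet S x) {a : Rd d} (ha : a ∈ S) :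
    ⟪x - p, a - p⟫ ≤ ‖a - p‖ ^ 2 / 2 := by
  have h1 : dist x p ≤ dist x a := hp.2 ▸ infDist_le_dist_of_mem ha
  rw [dist_eq_norm, dist_eq_norm] at h1
  have h2 : ‖x - p‖ ^ 2 ≤ ‖x - a‖ ^ 2 := by
    have := norm_nonneg (x - p)
    nlinarith
  have e : ‖x - a‖ ^ 2 = ‖x - p‖ ^ 2 - 2 * ⟪x - p, a - p⟫ + ‖a - p‖ ^ 2 := by
    rw [show x - a = (x - p) - (a - p) by abel, norm_sub_sq_real]
  linarith

/-- points on the segment from a projection point to the point keep the projection. -/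
lemma seg_lemma {S : Set (Rd d)} {x p : Rd d} (hp : p ∈ projSet S x)
    {t : ℝ} (ht0 : 0 ≤ t) (ht1 : t ≤ 1) :
    p ∈ projSet S (p + t • (x - p)) ∧ infDist (p + t • (x - p)) S = t * dist x p := by
  set z := p + t • (x - p) with hz
  have hSne : S.Nonempty := ⟨p, hp.1⟩
  have hzp : dist z p = t * dist x p := by
    rw [dist_eq_norm, dist_eq_norm, hz]
    rw [show p + t • (x - p) - p = t • (x - p) by abel, norm_smul]
    simp [abs_of_nonneg ht0]
  have hxz : dist x z = (1 - t) * dist x p := by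
    rw [dist_eq_norm, dist_eq_norm, hz]
    rw [show x - (p + t • (x - p)) = (1 - t) • (x - p) by module, norm_smul]
    simp [abs_of_nonneg (by linarith : (0:ℝ) ≤ 1 - t)]
  have hlow : t * dist x p ≤ infDist z S := by
    refine le_infDist' hSne fun a ha => ?_
    have h1 : dist x p ≤ dist x a := hp.2 ▸ infDist_le_dist_of_mem ha
    have h2 : dist x a ≤ dist x z + dist z a := dist_triangle _ _ _
    linarith [hxz ▸ h2]
  have hup : infDist z S ≤ t * dist x p := hzp ▸ infDist_le_dist_of_mem hp.1
  have he : infDist z S = t * dist x p := le_antisymm hup hlow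
  exact ⟨⟨hp.1, hzp.trans he.symm⟩, he⟩

lemma euler_step_basic {S : Set (Rd d)} {P : Rd d → Rd d} {h : ℝ} (hh : 0 < h)
    {z z' : Rd d} (hz' : z' = z + (h * (infDist z S)⁻¹) • (z - P z))
    (hD0 : 0 < infDist z S) (hPz : P z ∈ projSet S z) :
    dist z' z = h ∧ dist z' (P z) = infDist z S + h := by
  set D := infDist z S with hDdef
  have hnzP : ‖z - P z‖ = D := by rw [← dist_eq_norm]; exact hPz.2
  constructor
  · rw [hz', dist_eq_norm,
      show z + (h * D⁻¹) • (z - P z) - z = (h * D⁻¹) • (z - P z) by abel,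
      norm_smul, hnzP, Real.norm_eq_abs, abs_of_pos (by positivity)]
    field_simp
  · rw [hz', dist_eq_norm,
      show z + (h * D⁻¹) • (z - P z) - P z = (1 + h * D⁻¹) • (z - P z) by module,
      norm_smul, hnzP, Real.norm_eq_abs, abs_of_pos (by positivity)]
    field_simp

lemma euler_step_low {S : Set (Rd d)} {P : Rd d → Rd d} {h ε2 : ℝ} (hh : 0 < h)
    (hε2 : 0 < ε2) {z z' q : Rd d} (hz' : z' = z + (h * (infDist z S)⁻¹) • (z - P z))
    (hD0 : 0 < infDist z S) (hPz : P z ∈ projSet S z) (hq : q ∈ projSet S z')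
    (he : ‖q - P z‖ ≤ ε2) :
    (infDist z S + h)^2 - h*ε2^2/(infDist z S) ≤ infDist z' S ^ 2 := by
  set D := infDist z S with hDdef
  have hnzP : ‖z - P z‖ = D := by rw [← dist_eq_norm]; exact hPz.2
  have hip : ⟪z - P z, q - P z⟫ ≤ ε2^2/2 := by
    have h1 := free_hypo hPz hq.1
    have h2 : ‖q - P z‖^2 ≤ ε2^2 := by nlinarith [norm_nonneg (q - P z)]
    linarith
  have hzqn : D ≤ ‖z - q‖ := by rw [← dist_eq_norm]; exact infDist_le_dist_of_mem hq.1
  have hinn : ⟪z - q, z - P z⟫ = D^2 - ⟪z - P z, q - P z⟫ := by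
    rw [real_inner_comm, show (z:Rd d) - q = (z - P z) - (q - P z) by abel,
      inner_sub_right, real_inner_self_eq_norm_sq, hnzP]
  have hiq : infDist z' S = dist z' q := hq.2.symm
  have hexp : infDist z' S ^2 = ‖z - q‖^2 + 2*(h*D⁻¹)*⟪z - q, z - P z⟫ + (h*D⁻¹)^2*D^2 := by
    rw [hiq, hz', dist_eq_norm,
      show z + (h * D⁻¹) • (z - P z) - q = (z - q) + (h*D⁻¹) • (z - P z) by abel,
      norm_add_sq_real, real_inner_smul_right, norm_smul, Real.norm_eq_abs,
      abs_of_pos (by positivity : (0:ℝ) < h*D⁻¹), hnzP]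
    ring
  rw [hexp, hinn]
  have hD' : (h*D⁻¹)^2*D^2 = h^2 := by field_simp
  have hcross : 2*h*D - h*ε2^2/D ≤ 2*(h*D⁻¹)*(D^2 - ⟪z - P z, q - P z⟫) := by
    have h5 : 2*(h*D⁻¹)*(D^2 - ε2^2/2) ≤ 2*(h*D⁻¹)*(D^2 - ⟪z - P z, q - P z⟫) :=
      mul_le_mul_of_nonneg_left (by linarith) (by positivity)
    have h6 : 2*h*D - h*ε2^2/D = 2*(h*D⁻¹)*(D^2 - ε2^2/2) := by field_simp
    linarith
  have hsq : D^2 ≤ ‖z - q‖^2 := by nlinarith [hzqn, hD0.le]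
  linarith [hcross, hD', hsq]

lemma step_arith {ρ h m ε2 D dq A L : ℝ} (hρ : 0 < ρ) (hh : 0 < h) (hε2 : 0 < ε2)
    (hm : m = 4*h*ε2^2/ρ^2) (hAD : A ≤ D) (hA2 : ρ/2 ≤ A) (hL : L = A + h - m)
    (hL2 : ρ/2 ≤ L) (hdq0 : 0 ≤ dq) (hdq : (D+h)^2 - h*ε2^2/D ≤ dq^2) : L ≤ dq := by
  have hD2 : ρ/2 ≤ D := le_trans hA2 hAD
  have hD0 : 0 < D := by linarith
  have h8 : 0 ≤ h*ε2^2/ρ := by positivity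
  have he2D : h*ε2^2/D ≤ 2*(h*ε2^2/ρ) := by
    rw [show 2*(h*ε2^2/ρ) = 2*h*ε2^2/ρ by ring,
      div_le_div_iff₀ hD0 (by linarith : (0:ℝ) < ρ)]
    nlinarith [mul_nonneg (mul_nonneg hh.le (sq_nonneg ε2)) (by linarith : (0:ℝ) ≤ 2*D - ρ)]
  have h7 : 4*(h*ε2^2/ρ) ≤ m*(A+h+L) := by
    have hm0 : 0 ≤ m := by rw [hm]; positivity
    have h7' : m*ρ ≤ m*(A+h+L) := mul_le_mul_of_nonneg_left (by linarith) hm0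
    have hmρ : m*ρ = 4*(h*ε2^2/ρ) := by rw [hm]; field_simp
    linarith
  have hALprod : (A+h)^2 - L^2 = m*(A+h+L) := by rw [hL]; ring
  have h10 : (A+h)^2 ≤ (D+h)^2 := by nlinarith
  have hfin : L^2 ≤ dq^2 := by linarith
  nlinarith [hfin, hL2, hρ, hdq0]

set_option maxHeartbeats 1000000 in
lemma ray_lemma {r : ℝ} {S : Set (Rd d)} (hS : IsProxRegular r S)
    {x p : Rd d} (hp : p ∈ projSet S x) (hρ : 0 < dist x p)
    {τ : ℝ} (hτ1 : dist x p ≤ τ) (hτ2 : τ < r) :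
    infDist (p + τ • ((dist x p)⁻¹ • (x - p))) S = τ := by
  set ρ := dist x p with hρdef
  have hxeq : p + ρ • (ρ⁻¹ • (x - p)) = x := by
    rw [smul_smul, mul_inv_cancel₀ (ne_of_gt hρ), one_smul]; abel
  rcases eq_or_lt_of_le hτ1 with hτeq | hτlt
  · rw [← hτeq, hxeq, ← hp.2]
  obtain ⟨hcl, P, hPp, hPc⟩ := hS
  have hSne : S.Nonempty := ⟨p, hp.1⟩
  have hPmem : ∀ z, infDist z S < r → P z ∈ projSet S z := fun z hz => (hPp z hz) ▸ rfl
  set u : Rd d := ρ⁻¹ • (x - p) with hudef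
  set r' := (τ + r)/2 with hr'def
  have hτr' : τ < r' := by rw [hr'def]; linarith
  have hr'r : r' < r := by rw [hr'def]; linarith
  set K := closedBall p r' ∩ {z | infDist z S ≤ r'} with hKdef
  have hK : IsCompact K := (isCompact_closedBall p r').inter_right
    (IsClosed.preimage (continuous_infDist_pt S) isClosed_Iic)
  have hKU : K ⊆ {z | infDist z S < r} := fun z hz => lt_of_le_of_lt hz.2 hr'r
  have huc : UniformContinuousOn P K := hK.uniformContinuousOn_of_continuous (hPc.mono hKU)
  have hKmem : ∀ y : Rd d, dist y p ≤ r' → infDist y S ≤ r' → y ∈ K := by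
    intro y h1 h2
    exact ⟨mem_closedBall.2 h1, h2⟩
  have main : ∀ ε : ℝ, 0 < ε → ∃ w : Rd d,
      dist w x ≤ τ - ρ ∧ dist w p ≤ τ ∧ infDist w S ≤ τ ∧ τ - ε ≤ infDist w S := by
    intro ε hε
    set c := min (ρ/2) ε with hcdef
    have hc : 0 < c := lt_min (by linarith) hε
    have hcρ : c ≤ ρ/2 := min_le_left _ _
    have hcε : c ≤ ε := min_le_right _ _
    have hτρ : (0:ℝ) < τ - ρ := by linarith
    set ε2 := Real.sqrt (ρ^2 * c / (4*(τ - ρ))) with hε2def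
    have hε2 : 0 < ε2 := Real.sqrt_pos.2 (by positivity)
    have hε2sq : ε2^2 = ρ^2 * c / (4*(τ - ρ)) := Real.sq_sqrt (by positivity)
    obtain ⟨δ, hδ0, hδP⟩ := (Metric.uniformContinuousOn_iff).1 huc ε2 hε2
    obtain ⟨N, hN⟩ := exists_nat_gt ((τ - ρ)/δ)
    have hN0 : 0 < (N:ℝ) := lt_trans (by positivity) hN
    set h := (τ - ρ)/N with hhdef
    have hh : 0 < h := by positivity
    have hhδ : h < δ := by
      rw [hhdef, div_lt_iff₀ hN0]
      calc τ - ρ = ((τ - ρ)/δ) * δ := by field_simp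
      _ < N * δ := mul_lt_mul_of_pos_right hN hδ0
      _ = δ * N := mul_comm _ _
    set m := 4*h*ε2^2/ρ^2 with hmdef
    have hm : 0 < m := by positivity
    have hNh : (N:ℝ)*h = τ - ρ := by rw [hhdef]; field_simp
    have hNm : (N:ℝ)*m = c := by
      have h9 : (N:ℝ)*m = 4*((N:ℝ)*h)*ε2^2/ρ^2 := by rw [hmdef]; ring
      rw [h9, hNh, hε2sq]
      field_simp
    set F : Rd d → Rd d := fun z => z + (h * (infDist z S)⁻¹) • (z - P z) with hFdef
    set w : ℕ → Rd d := fun k => F^[k] x with hwdef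
    have hw0 : w 0 = x := by simp [hwdef]
    have hwsucc : ∀ k : ℕ, w (k+1) = w k + (h * (infDist (w k) S)⁻¹) • (w k - P (w k)) := by
      intro k
      simp only [hwdef, Function.iterate_succ_apply', hFdef]
    have inv : ∀ k, k ≤ N → dist (w k) x ≤ k*h ∧ dist (w k) p ≤ ρ + k*h ∧
        infDist (w k) S ≤ ρ + k*h ∧ ρ + k*h - k*m ≤ infDist (w k) S := by
      intro k
      induction k with
      | zero =>
        intro _
        rw [hw0]
        simp only [Nat.cast_zero, zero_mul, add_zero, sub_zero, dist_self]
        exact ⟨le_refl _, le_of_eq hρdef.symm, le_of_eq hp.2.symm, le_of_eq hp.2⟩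
      | succ k ih =>
        intro hk1
        have hk : k ≤ N := Nat.le_of_succ_le hk1
        obtain ⟨i1, i2, i3, i4⟩ := ih hk
        push_cast
        have hkm : (k:ℝ)*m ≤ c := by
          rw [← hNm]
          exact mul_le_mul_of_nonneg_right (Nat.cast_le.2 hk) (le_of_lt hm)
        have hk1m : ((k:ℝ)+1)*m ≤ c := by
          rw [← hNm]
          refine mul_le_mul_of_nonneg_right ?_ (le_of_lt hm)
          exact_mod_cast Nat.cast_le.2 hk1
        have hkh : (k:ℝ)*h ≤ τ - ρ := by
          rw [← hNh]
          exact mul_le_mul_of_nonneg_right (Nat.cast_le.2 hk) (le_of_lt hh)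
        have hk1h : ((k:ℝ)+1)*h ≤ τ - ρ := by
          rw [← hNh]
          refine mul_le_mul_of_nonneg_right ?_ (le_of_lt hh)
          exact_mod_cast Nat.cast_le.2 hk1
        have hkh0 : 0 ≤ (k:ℝ)*h := by positivity
        have hD2 : ρ/2 ≤ infDist (w k) S := by linarith [i4, hkm, hcρ]
        have hD0 : 0 < infDist (w k) S := by linarith
        have hDτ : infDist (w k) S ≤ τ := by linarith [i3]
        have hDr : infDist (w k) S < r := lt_of_le_of_lt hDτ hτ2
        have hPz := hPmem (w k) hDr
        obtain ⟨hstep, hup'⟩ := euler_step_basic hh (hwsucc k) hD0 hPz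
        have j1 : dist (w (k+1)) x ≤ ((k:ℝ)+1)*h := by
          have := dist_triangle (w (k+1)) (w k) x
          rw [hstep] at this
          linarith [i1]
        have j2 : dist (w (k+1)) p ≤ ρ + ((k:ℝ)+1)*h := by
          have := dist_triangle (w (k+1)) (w k) p
          rw [hstep] at this
          linarith [i2]
        have j3 : infDist (w (k+1)) S ≤ ρ + ((k:ℝ)+1)*h := by
          have := infDist_le_dist_of_mem (x := w (k+1)) hPz.1
          rw [hup'] at this
          linarith [i3]
        have hw1τ : infDist (w (k+1)) S ≤ τ := by linarith [j3]
        have hw1r : infDist (w (k+1)) S < r := lt_of_le_of_lt hw1τ hτ2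
        have hq := hPmem _ hw1r
        have hzK : w k ∈ K := hKmem _ (by linarith [i2, hτr'.le]) (by linarith [hDτ, hτr'.le])
        have hwK : w (k+1) ∈ K := hKmem _ (by linarith [j2, hτr'.le]) (by linarith [hw1τ, hτr'.le])
        have hqe : dist (P (w k)) (P (w (k+1))) < ε2 :=
          hδP (w k) hzK (w (k+1)) hwK
            (by rw [dist_comm]; exact lt_of_le_of_lt (le_of_eq hstep) hhδ)
        have henorm : ‖P (w (k+1)) - P (w k)‖ ≤ ε2 := by
          rw [← dist_eq_norm, dist_comm]
          exact le_of_lt hqe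
        have hlow2 := euler_step_low hh hε2 (hwsucc k) hD0 hPz hq henorm
        have hgoal : ρ + ((k:ℝ)+1)*h - ((k:ℝ)+1)*m ≤ infDist (w (k+1)) S := by
          refine step_arith (D := infDist (w k) S) (A := ρ + (k:ℝ)*h - (k:ℝ)*m)
            (dq := infDist (w (k+1)) S) hρ hh hε2 hmdef ?_ ?_ (by ring) ?_
            infDist_nonneg hlow2
          · linarith [i4]
          · linarith [hkm, hcρ, hkh0]
          · linarith [hk1m, hcρ]
        exact ⟨j1, j2, j3, hgoal⟩
    obtain ⟨j1, j2, j3, j4⟩ := inv N le_rfl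
    refine ⟨w N, ?_, ?_, ?_, ?_⟩
    · rw [← hNh]; exact j1
    · calc dist (w N) p ≤ ρ + (N:ℝ)*h := j2
      _ = τ := by rw [hNh]; ring
    · calc infDist (w N) S ≤ ρ + (N:ℝ)*h := j3
      _ = τ := by rw [hNh]; ring
    · calc τ - ε ≤ ρ + (N:ℝ)*h - (N:ℝ)*m := by rw [hNh, hNm]; linarith
      _ ≤ infDist (w N) S := j4
  choose W hW1 hW2 hW3 hW4 using fun n : ℕ => main (1/(n+1)) (by positivity)
  obtain ⟨wl, hwlmem, ψ, hψmono, hψt⟩ := (isCompact_closedBall x (τ - ρ)).tendsto_subseq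
    (fun n => mem_closedBall.2 (hW1 n))
  have hinf : Tendsto (fun j => infDist (W (ψ j)) S) atTop (𝓝 (infDist wl S)) :=
    ((continuous_infDist_pt S).tendsto wl).comp hψt
  have hdistp : Tendsto (fun j => dist (W (ψ j)) p) atTop (𝓝 (dist wl p)) :=
    ((continuous_id.dist continuous_const).tendsto wl).comp hψt
  have hone : Tendsto (fun j : ℕ => τ - 1/((ψ j : ℝ)+1)) atTop (𝓝 τ) := by
    have h0 : Tendsto (fun j : ℕ => 1/((ψ j : ℝ)+1)) atTop (𝓝 0) :=
      tendsto_one_div_add_atTop_nhds_zero_nat.comp hψmono.tendsto_atTop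
    have := Tendsto.sub (tendsto_const_nhds (x := τ) (f := atTop)) h0
    simpa using this
  have hlower : τ ≤ infDist wl S :=
    le_of_tendsto_of_tendsto' hone hinf (fun j => hW4 (ψ j))
  have hupperp : dist wl p ≤ τ :=
    le_of_tendsto hdistp (Filter.Eventually.of_forall (fun j => hW2 (ψ j)))
  have hupper : infDist wl S ≤ dist wl p := infDist_le_dist_of_mem hp.1
  have hinfeq : infDist wl S = τ := le_antisymm (le_trans hupper hupperp) hlower
  have hdistpeq : dist wl p = τ := le_antisymm hupperp (by rw [← hinfeq]; exact hupper)
  have hwlx : dist wl x ≤ τ - ρ := mem_closedBall.1 hwlmem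
  have hwlxeq : dist wl x = τ - ρ := by
    have h3 := dist_triangle wl x p
    rw [hdistpeq, ← hρdef] at h3
    linarith
  have hnA : ‖wl - x‖ = τ - ρ := by rw [← dist_eq_norm]; exact hwlxeq
  have hnB : ‖x - p‖ = ρ := by rw [← dist_eq_norm]
  have hnAB : ‖(wl - x) + (x - p)‖ = ‖wl - x‖ + ‖x - p‖ := by
    rw [show (wl - x) + (x - p) = wl - p by abel, ← dist_eq_norm, hdistpeq, hnA, hnB]
    try ring
  have hinner : ⟪wl - x, x - p⟫ = ‖wl - x‖ * ‖x - p‖ := by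
    have h4 := norm_add_sq_real (wl - x) (x - p)
    rw [hnAB] at h4
    nlinarith [h4]
  have hsmul : ‖x - p‖ • (wl - x) = ‖wl - x‖ • (x - p) :=
    inner_eq_norm_mul_iff_real.1 hinner
  have hwl : wl = p + τ • u := by
    rw [hnA, hnB] at hsmul
    have hA : wl - x = (ρ⁻¹ * (τ - ρ)) • (x - p) := by
      have h5 := congrArg (fun v : Rd d => ρ⁻¹ • v) hsmul
      simp only [smul_smul] at h5
      rw [inv_mul_cancel₀ (ne_of_gt hρ), one_smul] at h5
      rw [h5]
    have h6 : wl = x + (ρ⁻¹ * (τ - ρ)) • (x - p) := by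
      rw [← hA]; abel
    have h7 : x + (ρ⁻¹ * (τ - ρ)) • (x - p) = p + ((1:ℝ) + ρ⁻¹ * (τ - ρ)) • (x - p) := by
      module
    have h8 : (1:ℝ) + ρ⁻¹ * (τ - ρ) = τ * ρ⁻¹ := by
      field_simp
      ring
    rw [h6, h7, h8, hudef, smul_smul]
  rw [← hwl]
  exact hinfeq

set_option maxHeartbeats 1000000 in
lemma hypo_of_proxRegular {r : ℝ} (hr : 0 < r) {S : Set (Rd d)} (hS : IsProxRegular r S)
    {x p : Rd d} (hx : infDist x S < r) (hp : p ∈ projSet S x) {a : Rd d} (ha : a ∈ S) :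
    ⟪x - p, a - p⟫ ≤ dist x p / (2*r) * ‖a - p‖^2 := by
  rcases eq_or_lt_of_le (dist_nonneg (x := x) (y := p)) with h0 | hρ
  · have hxp : x = p := dist_eq_zero.1 h0.symm
    rw [hxp]
    simp
  · have hρr : dist x p < r := by rw [hp.2]; exact hx
    have key : ∀ τ : ℝ, dist x p ≤ τ → τ < r →
        2*τ*⟪(dist x p)⁻¹ • (x-p), a - p⟫ ≤ ‖a - p‖^2 := by
      intro τ h1 h2
      have hray := ray_lemma hS hp hρ h1 h2
      have hd : τ ≤ dist (p + τ • ((dist x p)⁻¹ • (x-p))) a := by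
        have hd' : infDist (p + τ • ((dist x p)⁻¹ • (x-p))) S ≤
            dist (p + τ • ((dist x p)⁻¹ • (x-p))) a := infDist_le_dist_of_mem ha
        rw [hray] at hd'
        exact hd' 
      have hu : ‖(dist x p)⁻¹ • (x-p)‖ = 1 := by
        rw [norm_smul, Real.norm_eq_abs, abs_of_pos (by positivity), ← dist_eq_norm]
        exact inv_mul_cancel₀ (ne_of_gt hρ)
      have hτ0 : 0 < τ := lt_of_lt_of_le hρ h1
      have hexp : dist (p + τ • ((dist x p)⁻¹ • (x-p))) a ^ 2 =
          τ^2 + 2*τ*⟪(dist x p)⁻¹ • (x-p), p - a⟫ + ‖p - a‖^2 := by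
        rw [dist_eq_norm, show p + τ • ((dist x p)⁻¹ • (x-p)) - a =
            τ • ((dist x p)⁻¹ • (x-p)) + (p - a) by abel,
          norm_add_sq_real, real_inner_smul_left, norm_smul, hu, Real.norm_eq_abs,
          abs_of_pos hτ0]
        ring
      have hsq : τ^2 ≤ dist (p + τ • ((dist x p)⁻¹ • (x-p))) a ^ 2 := by
        nlinarith [hd, hτ0, dist_nonneg (x := p + τ • ((dist x p)⁻¹ • (x-p))) (y := a)]
      rw [hexp] at hsq
      have hneg : ⟪(dist x p)⁻¹ • (x-p), p - a⟫ = -⟪(dist x p)⁻¹ • (x-p), a - p⟫ := by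
        rw [show (p : Rd d) - a = -(a - p) by abel, inner_neg_right]
      rw [hneg] at hsq
      have hnn : ‖p - a‖ = ‖a - p‖ := norm_sub_rev _ _
      rw [hnn] at hsq
      linarith
    have hval : 2*r*⟪(dist x p)⁻¹ • (x-p), a - p⟫ ≤ ‖a - p‖^2 := by
      by_contra hcon
      push_neg at hcon
      have hI : 0 < ⟪(dist x p)⁻¹ • (x-p), a - p⟫ := by
        nlinarith [sq_nonneg ‖a - p‖]
      set I := ⟪(dist x p)⁻¹ • (x-p), a - p⟫ with hIdef
      set KK := ‖a - p‖^2 with hKdef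
      have hKr : KK/(2*I) < r := by
        rw [div_lt_iff₀ (by positivity)]
        nlinarith
      set τ := max (dist x p) ((KK/(2*I) + r)/2) with hτdef
      have hτ1 : dist x p ≤ τ := le_max_left _ _
      have hτ2 : τ < r := by
        rw [hτdef]
        exact max_lt hρr (by linarith)
      have hτ3 : KK/(2*I) < τ := by
        rw [hτdef]
        exact lt_of_lt_of_le (by linarith) (le_max_right _ _)
      have h3 := key τ hτ1 hτ2
      rw [div_lt_iff₀ (by positivity)] at hτ3
      nlinarith
    have hsm : (dist x p) • ((dist x p)⁻¹ • (x - p)) = x - p := by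
      rw [smul_smul, mul_inv_cancel₀ (ne_of_gt hρ), one_smul]
    have hre : ⟪x - p, a - p⟫ = (dist x p) * ⟪(dist x p)⁻¹ • (x-p), a - p⟫ := by
      rw [← real_inner_smul_left, hsm]
    rw [hre, div_mul_eq_mul_div, le_div_iff₀ (by linarith : (0:ℝ) < 2*r)]
    nlinarith [hval, hρ.le]

lemma limit_hypo {r : ℝ} (hr : 0 < r) {Ω : Set (Rd d)} (hΩ : IsCompact Ω)
    {A : ℕ → Set (Rd d)} (hAc : ∀ n, IsCompact (A n)) (hAne : ∀ n, (A n).Nonempty)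
    (hApr : ∀ n, IsProxRegular r (A n)) (hAΩ : ∀ n, A n ⊆ Ω)
    {C : Set (Rd d)} (hC : IsCompact C) (hCne : C.Nonempty)
    (hconv : Tendsto (fun n => hausdorffDist (A n) C) atTop (𝓝 0))
    {x : Rd d} (hx0 : 0 < infDist x C) (hxr : infDist x C < r) :
    ∃ p ∈ projSet C x, ∀ z ∈ C, ⟪x - p, z - p⟫ ≤ infDist x C / (2*r) * ‖z - p‖^2 := by
  have hfin : ∀ n, EMetric.hausdorffEdist (A n) C ≠ ⊤ := fun n =>
    hausdorffEdist_ne_top_of_nonempty_of_bounded (hAne n) hCne (hAc n).isBounded hC.isBounded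
  have hfin' : ∀ n, EMetric.hausdorffEdist C (A n) ≠ ⊤ := fun n => by
    show hausdorffEDist C (A n) ≠ ⊤
    rw [hausdorffEDist_comm]; exact hfin n
  have hconv2 : ∀ y : Rd d, Tendsto (fun n => infDist y (A n)) atTop (𝓝 (infDist y C)) := by
    intro y
    have hb : ∀ n, ‖infDist y (A n) - infDist y C‖ ≤ hausdorffDist (A n) C := by
      intro n
      rw [Real.norm_eq_abs, abs_sub_le_iff]
      constructor
      · have i1 : infDist y (A n) ≤ infDist y C + hausdorffDist C (A n) :=
          infDist_le_infDist_add_hausdorffDist (hfin' n)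
        rw [hausdorffDist_comm] at i1
        linarith
      · have i2 : infDist y C ≤ infDist y (A n) + hausdorffDist (A n) C :=
          infDist_le_infDist_add_hausdorffDist (hfin n)
        linarith
    exact tendsto_sub_nhds_zero_iff.1 (squeeze_zero_norm hb hconv)
  choose pn hpn1 hpn2 using fun n => (hAc n).exists_infDist_eq_dist (hAne n) x
  obtain ⟨p, hpΩ, ψ, hψmono, hψt⟩ := hΩ.tendsto_subseq (fun n => hAΩ n (hpn1 n))
  have hHψ : Tendsto (fun j => hausdorffDist (A (ψ j)) C) atTop (𝓝 0) :=
    hconv.comp hψmono.tendsto_atTop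
  have hpC : p ∈ C := by
    have h1 : ∀ j, infDist (pn (ψ j)) C ≤ hausdorffDist (A (ψ j)) C := fun j =>
      infDist_le_hausdorffDist_of_mem (hpn1 (ψ j)) (hfin (ψ j))
    have h2 : Tendsto (fun j => infDist (pn (ψ j)) C) atTop (𝓝 (infDist p C)) :=
      ((continuous_infDist_pt C).tendsto p).comp hψt
    have h3 : infDist p C ≤ 0 := le_of_tendsto_of_tendsto' h2 hHψ h1
    exact (IsClosed.mem_iff_infDist_zero hC.isClosed hCne).2
      (le_antisymm h3 infDist_nonneg)
  have hdxp : dist x p = infDist x C := by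
    have h5 : Tendsto (fun j => dist x (pn (ψ j))) atTop (𝓝 (dist x p)) :=
      ((continuous_const.dist continuous_id).tendsto p).comp hψt
    have h6 : Tendsto (fun j => infDist x (A (ψ j))) atTop (𝓝 (infDist x C)) :=
      (hconv2 x).comp hψmono.tendsto_atTop
    have h7 : (fun j => infDist x (A (ψ j))) = fun j => dist x (pn (ψ j)) :=
      funext fun j => hpn2 (ψ j)
    rw [h7] at h6
    exact tendsto_nhds_unique h5 h6
  refine ⟨p, ⟨hpC, hdxp⟩, ?_⟩
  intro z hz
  choose zn hzn1 hzn2 using fun n => (hAc n).exists_infDist_eq_dist (hAne n) z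
  have hznz : Tendsto (fun j => dist z (zn (ψ j))) atTop (𝓝 0) := by
    have hb : ∀ j, dist z (zn (ψ j)) ≤ hausdorffDist (A (ψ j)) C := by
      intro j
      rw [← hzn2 (ψ j)]
      have i1 : infDist z (A (ψ j)) ≤ infDist z C + hausdorffDist C (A (ψ j)) :=
        infDist_le_infDist_add_hausdorffDist (hfin' (ψ j))
      rw [infDist_zero_of_mem hz, hausdorffDist_comm] at i1
      linarith
    exact squeeze_zero (fun j => dist_nonneg) hb hHψ
  have hzntend : Tendsto (fun j => zn (ψ j)) atTop (𝓝 z) := by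
    rw [tendsto_iff_dist_tendsto_zero]
    simpa [dist_comm] using hznz
  have h6 : Tendsto (fun j => infDist x (A (ψ j))) atTop (𝓝 (infDist x C)) :=
    (hconv2 x).comp hψmono.tendsto_atTop
  have hev : ∀ᶠ j in atTop, infDist x (A (ψ j)) < r :=
    h6.eventually_lt_const hxr
  have hineq : ∀ᶠ j in atTop, ⟪x - pn (ψ j), zn (ψ j) - pn (ψ j)⟫ ≤
      dist x (pn (ψ j)) / (2*r) * ‖zn (ψ j) - pn (ψ j)‖^2 := by
    filter_upwards [hev] with j hj
    exact hypo_of_proxRegular hr (hApr (ψ j)) hj ⟨hpn1 (ψ j), (hpn2 (ψ j)).symm⟩ (hzn1 (ψ j))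
  have hL : Tendsto (fun j => ⟪x - pn (ψ j), zn (ψ j) - pn (ψ j)⟫) atTop
      (𝓝 ⟪x - p, z - p⟫) :=
    Tendsto.inner (tendsto_const_nhds.sub hψt) (hzntend.sub hψt)
  have hR : Tendsto (fun j => dist x (pn (ψ j)) / (2*r) * ‖zn (ψ j) - pn (ψ j)‖^2) atTop
      (𝓝 (dist x p / (2*r) * ‖z - p‖^2)) := by
    refine Tendsto.mul (Tendsto.div_const ?_ _) ?_
    · exact ((continuous_const.dist continuous_id).tendsto p).comp hψt
    · exact ((hzntend.sub hψt).norm).pow 2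
  have hle := le_of_tendsto_of_tendsto hL hR hineq
  rw [hdxp] at hle
  exact hle

set_option maxHeartbeats 1000000 in
lemma proxRegular_of_limit {r : ℝ} (hr : 0 < r) {Ω : Set (Rd d)} (hΩ : IsCompact Ω)
    {A : ℕ → Set (Rd d)} (hAc : ∀ n, IsCompact (A n)) (hAne : ∀ n, (A n).Nonempty)
    (hApr : ∀ n, IsProxRegular r (A n)) (hAΩ : ∀ n, A n ⊆ Ω)
    {C : Set (Rd d)} (hC : IsCompact C) (hCne : C.Nonempty)
    (hconv : Tendsto (fun n => hausdorffDist (A n) C) atTop (𝓝 0)) :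
    IsProxRegular r C := by
  classical
  choose P hP1 hP2 using fun y : Rd d => hC.exists_infDist_eq_dist hCne y
  have hPproj : ∀ y, P y ∈ projSet C y := fun y => ⟨hP1 y, (hP2 y).symm⟩
  have claim : ∀ y : Rd d, infDist y C < r →
      projSet C y = {P y} ∧
      ∀ z ∈ C, ⟪y - P y, z - P y⟫ ≤ infDist y C / (2*r) * ‖z - P y‖^2 := by
    intro y hy
    rcases eq_or_lt_of_le (infDist_nonneg (x := y) (s := C)) with h0 | h0
    · have hyC : y ∈ C := (IsClosed.mem_iff_infDist_zero hC.isClosed hCne).2 h0.symm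
      have hPy : P y = y := by
        have hd0 : dist y (P y) = 0 := by rw [← hP2 y, ← h0]
        exact (dist_eq_zero.1 hd0).symm
      constructor
      · ext a
        simp only [mem_singleton_iff]
        constructor
        · rintro ⟨haC, hda⟩
          rw [← h0] at hda
          rw [hPy, ← dist_eq_zero.1 hda]
        · intro haa
          rw [haa, hPy]
          exact ⟨hyC, by rw [dist_self]; exact h0⟩
      · intro z hz
        rw [hPy]
        simp only [sub_self, inner_zero_left]
        exact mul_nonneg (div_nonneg infDist_nonneg (by linarith)) (sq_nonneg _)
    · obtain ⟨p, hpmem, hphypo⟩ :=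
        limit_hypo hr hΩ hAc hAne hApr hAΩ hC hCne hconv h0 hy
      have huniq : ∀ a ∈ projSet C y, a = p := by
        intro a ha
        have h1 := hphypo a ha.1
        have h2 : ‖a - p‖^2 = 2*⟪y - p, a - p⟫ := by
          have e1 : dist y a = dist y p := by rw [ha.2, hpmem.2]
          have e2 : ‖a - p‖^2 = ‖y - p‖^2 - 2*⟪y - p, y - a⟫ + ‖y - a‖^2 := by
            rw [show (a:Rd d) - p = (y - p) - (y - a) by abel, norm_sub_sq_real]
          have e3 : ⟪y - p, a - p⟫ = ‖y - p‖^2 - ⟪y - p, y - a⟫ := by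
            rw [show (a:Rd d) - p = (y - p) - (y - a) by abel, inner_sub_right,
              real_inner_self_eq_norm_sq]
          have e4 : ‖y - a‖ = ‖y - p‖ := by
            rw [← dist_eq_norm, ← dist_eq_norm, e1]
          rw [e2, e3, e4]
          ring
        have h6 : 0 < 1 - infDist y C/r := by
          rw [sub_pos, div_lt_one hr]
          exact hy
        have h5 : ‖a - p‖^2 * (1 - infDist y C/r) ≤ 0 := by
          have hexp : infDist y C/(2*r) * ‖a-p‖^2 = (infDist y C/r) * ‖a-p‖^2 / 2 := by
            ring
          nlinarith [h1, h2]
        have h7 : ‖a - p‖^2 ≤ 0 := by nlinarith [h5, h6, sq_nonneg ‖a - p‖]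
        have h9 : ‖a - p‖ = 0 := by nlinarith [norm_nonneg (a - p), h7]
        have := norm_eq_zero.1 h9
        exact sub_eq_zero.1 this
      have hPy : P y = p := huniq (P y) (hPproj y)
      constructor
      · ext a
        simp only [mem_singleton_iff]
        constructor
        · intro ha
          rw [hPy]
          exact huniq a ha
        · intro ha
          rw [ha, hPy]
          exact hpmem
      · intro z hz
        rw [hPy]
        exact hphypo z hz
  have key : ∀ s : ℝ, s < r → ∀ u v : Rd d, infDist u C ≤ s → infDist v C ≤ s →
      ‖P u - P v‖ * (r - s) ≤ r * dist u v := by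
    intro s hsr u v hu hv
    have hur : infDist u C < r := lt_of_le_of_lt hu hsr
    have hvr : infDist v C < r := lt_of_le_of_lt hv hsr
    have c1 := (claim u hur).2 (P v) (hPproj v).1
    have c2 := (claim v hvr).2 (P u) (hPproj u).1
    have hnn : (0:ℝ) ≤ ‖P v - P u‖^2 := sq_nonneg _
    have hc : infDist u C/(2*r) ≤ s/(2*r) :=
      (div_le_div_iff_of_pos_right (by linarith : (0:ℝ) < 2*r)).2 hu
    have hc' : infDist v C/(2*r) ≤ s/(2*r) :=
      (div_le_div_iff_of_pos_right (by linarith : (0:ℝ) < 2*r)).2 hv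
    have c1' : ⟪u - P u, P v - P u⟫ ≤ s/(2*r)*‖P v - P u‖^2 :=
      le_trans c1 (mul_le_mul_of_nonneg_right hc hnn)
    have c2' : ⟪v - P v, P u - P v⟫ ≤ s/(2*r)*‖P v - P u‖^2 := by
      have := le_trans c2 (mul_le_mul_of_nonneg_right hc' (sq_nonneg ‖P u - P v‖))
      rw [norm_sub_rev (P u) (P v)] at this
      exact this
    have hclear : 2*r*(s/(2*r)*‖P v - P u‖^2) = s*‖P v - P u‖^2 := by
      field_simp
    have c1'' : 2*r*⟪u - P u, P v - P u⟫ ≤ s*‖P v - P u‖^2 := by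
      have := mul_le_mul_of_nonneg_left c1' (by linarith : (0:ℝ) ≤ 2*r)
      rw [hclear] at this
      exact this
    have c2'' : 2*r*⟪v - P v, P u - P v⟫ ≤ s*‖P v - P u‖^2 := by
      have := mul_le_mul_of_nonneg_left c2' (by linarith : (0:ℝ) ≤ 2*r)
      rw [hclear] at this
      exact this
    have habel : (u - P u) - (v - P v) = (u - v) + (P v - P u) := by abel
    have hid1 : ⟪v - P v, P u - P v⟫ = -⟪v - P v, P v - P u⟫ := by
      rw [show (P u : Rd d) - P v = -(P v - P u) by abel, inner_neg_right]
    have hid2 : ⟪u - P u, P v - P u⟫ - ⟪v - P v, P v - P u⟫ =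
        ⟪(u - v) + (P v - P u), P v - P u⟫ := by
      rw [← inner_sub_left, habel]
    have hid3 : ⟪(u - v) + (P v - P u), P v - P u⟫ =
        ⟪u - v, P v - P u⟫ + ‖P v - P u‖^2 := by
      rw [inner_add_left, real_inner_self_eq_norm_sq]
    have hid : ⟪u - P u, P v - P u⟫ + ⟪v - P v, P u - P v⟫ =
        ⟪u - v, P v - P u⟫ + ‖P v - P u‖^2 := by
      rw [hid1]
      linarith [hid2, hid3]
    have hidr := congrArg (fun t : ℝ => 2*r*t) hid
    have hCS : -(dist u v * ‖P v - P u‖) ≤ ⟪u - v, P v - P u⟫ := by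
      have h := abs_real_inner_le_norm (u - v) (P v - P u)
      rw [← dist_eq_norm] at h
      linarith [(abs_le.1 h).1]
    have hCSr := mul_le_mul_of_nonneg_left hCS (by linarith : (0:ℝ) ≤ 2*r)
    have hq : ‖P v - P u‖^2 * (r - s) ≤ r * dist u v * ‖P v - P u‖ := by
      nlinarith [c1'', c2'', hidr, hCSr]
    rw [norm_sub_rev (P u) (P v)]
    rcases eq_or_lt_of_le (norm_nonneg (P v - P u)) with hn0 | hn0
    · rw [← hn0, zero_mul]
      positivity
    · nlinarith [hq, hn0]
  have hcont : ContinuousOn P {y | infDist y C < r} := by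
    rw [Metric.continuousOn_iff]
    intro b hb ε hε
    have hb' : infDist b C < r := hb
    set s := (infDist b C + r)/2 with hsdef
    have hbs : infDist b C < s := by rw [hsdef]; linarith
    have hsr : s < r := by rw [hsdef]; linarith
    have hrs' : (0:ℝ) < r - s := by linarith
    refine ⟨min ((r - infDist b C)/2) (ε*(r-s)/(2*r)), lt_min (by linarith)
      (div_pos (mul_pos hε hrs') (by linarith)), ?_⟩
    intro a ha hab
    have h1 : infDist a C ≤ s := by
      have h2 : infDist a C ≤ infDist b C + dist a b := infDist_le_infDist_add_dist
      have h3 : dist a b < (r - infDist b C)/2 := lt_of_lt_of_le hab (min_le_left _ _)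
      rw [hsdef]; linarith
    have h2 := key s hsr a b h1 (le_of_lt hbs)
    have h5 : dist (P a) (P b) ≤ r * dist a b / (r - s) := by
      rw [dist_eq_norm, le_div_iff₀ hrs']
      exact h2
    have h6 : dist a b < ε*(r-s)/(2*r) := lt_of_lt_of_le hab (min_le_right _ _)
    have h7 : dist (P a) (P b) < r*(ε*(r-s)/(2*r))/(r-s) :=
      lt_of_le_of_lt h5 ((div_lt_div_iff_of_pos_right hrs').2 (by nlinarith [h6, hr]))
    have h8 : r*(ε*(r-s)/(2*r))/(r-s) = ε/2 := by
      have hrs0 : r - s ≠ 0 := ne_of_gt hrs'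
      have hr0 : r ≠ 0 := ne_of_gt hr
      field_simp
    rw [h8] at h7
    linarith
  exact ⟨hC.isClosed, P, fun y hy => (claim y hy).1, hcont⟩

end StmtAux

set_option maxHeartbeats 1000000 in
/-- Lemma (compactness, in the Hausdorff distance, of the family of compact
`r`-prox-regular subsets of `Ω` of full `θ`-measure). -/
theorem stmt17 {d : ℕ} (r : ℝ) (hr : 0 < r) (Ω : Set (Rd d)) (hΩ : IsCompact Ω)
    (θ : Measure (Rd d)) (hθ : IsProbabilityMeasure θ)
    (Cn : ℕ → Set (Rd d))
    (hCn : ∀ n, IsCompact (Cn n) ∧ IsProxRegular r (Cn n) ∧ Cn n ⊆ Ω ∧ θ (Cn n) = 1) :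
    ∃ C : Set (Rd d),
      (IsCompact C ∧ IsProxRegular r C ∧ C ⊆ Ω ∧ θ C = 1) ∧
      ∃ φ : ℕ → ℕ, StrictMono φ ∧
        Tendsto (fun k => hausdorffDist (Cn (φ k)) C) atTop (𝓝 0) := by
  classical
  have hne : ∀ n, (Cn n).Nonempty := by
    intro n
    rcases Set.eq_empty_or_nonempty (Cn n) with he | hne
    · exfalso
      have := (hCn n).2.2.2
      rw [he, measure_empty] at this
      exact zero_ne_one this
    · exact hne
  haveI : CompactSpace ↥Ω := isCompact_iff_compactSpace.1 hΩ
  have hpre : ∀ n, IsCompact (Subtype.val ⁻¹' Cn n : Set ↥Ω) := by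
    intro n
    exact (IsClosed.preimage continuous_subtype_val (hCn n).1.isClosed).isCompact
  have hprene : ∀ n, (Subtype.val ⁻¹' Cn n : Set ↥Ω).Nonempty := by
    intro n
    obtain ⟨y, hy⟩ := hne n
    exact ⟨⟨y, (hCn n).2.2.1 hy⟩, hy⟩
  set Kn : ℕ → TopologicalSpace.NonemptyCompacts ↥Ω :=
    fun n => ⟨⟨Subtype.val ⁻¹' Cn n, hpre n⟩, hprene n⟩ with hKndef
  have himg : ∀ n, Subtype.val '' (Subtype.val ⁻¹' Cn n : Set ↥Ω) = Cn n := by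
    intro n
    rw [Subtype.image_preimage_coe]
    exact inter_eq_self_of_subset_right (hCn n).2.2.1
  obtain ⟨L, -, φ, hφ, hLconv⟩ := isCompact_univ.tendsto_subseq (x := Kn)
    (fun n => mem_univ _)
  set C : Set (Rd d) := Subtype.val '' (L : Set ↥Ω) with hCdef
  have hCcomp : IsCompact C := L.isCompact.image continuous_subtype_val
  have hCne : C.Nonempty := L.nonempty.image _
  have hCΩ : C ⊆ Ω := by
    rintro _ ⟨y, -, rfl⟩
    exact y.2
  have hdist : ∀ k, hausdorffDist (Cn (φ k)) C = dist (Kn (φ k)) L := by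
    intro k
    rw [Metric.NonemptyCompacts.dist_eq, ← himg (φ k), hCdef]
    have hKset : ((Kn (φ k)) : Set ↥Ω) = Subtype.val ⁻¹' Cn (φ k) := rfl
    rw [hKset]
    exact hausdorffDist_image (isometry_subtype_coe (s := Ω))
  have hconv : Tendsto (fun k => hausdorffDist (Cn (φ k)) C) atTop (𝓝 0) := by
    have h1 : Tendsto (fun k => dist (Kn (φ k)) L) atTop (𝓝 0) :=
      tendsto_iff_dist_tendsto_zero.1 hLconv
    have h2 : (fun k => hausdorffDist (Cn (φ k)) C) = fun k => dist (Kn (φ k)) L :=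
      funext hdist
    rw [h2]
    exact h1
  have hpr : IsProxRegular r C :=
    StmtAux.proxRegular_of_limit hr hΩ (fun k => (hCn (φ k)).1) (fun k => hne (φ k))
      (fun k => (hCn (φ k)).2.1) (fun k => (hCn (φ k)).2.2.1) hCcomp hCne hconv
  have hfin : ∀ k, EMetric.hausdorffEdist (Cn (φ k)) C ≠ ⊤ := fun k =>
    hausdorffEdist_ne_top_of_nonempty_of_bounded (hne (φ k)) hCne
      ((hCn (φ k)).1.isBounded) hCcomp.isBounded
  have hsub : Cᶜ ⊆ ⋃ k, (Cn (φ k))ᶜ := by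
    intro x hx
    by_contra hmem
    simp only [mem_iUnion, mem_compl_iff, not_exists, not_not] at hmem
    apply hx
    have hb : ∀ k, infDist x C ≤ hausdorffDist (Cn (φ k)) C := fun k =>
      infDist_le_hausdorffDist_of_mem (hmem k) (hfin k)
    have h0 : infDist x C ≤ 0 :=
      le_of_tendsto_of_tendsto' (tendsto_const_nhds (x := infDist x C) (f := atTop))
        hconv hb
    exact (IsClosed.mem_iff_infDist_zero hCcomp.isClosed hCne).2
      (le_antisymm h0 infDist_nonneg)
  have hcompl : θ Cᶜ = 0 := by
    refine measure_mono_null hsub (measure_iUnion_null fun k => ?_)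
    exact (prob_compl_eq_zero_iff (hCn (φ k)).1.isClosed.measurableSet).2 (hCn (φ k)).2.2.2
  have hθC : θ C = 1 := by
    have h1 := measure_add_measure_compl (μ := θ) hCcomp.isClosed.measurableSet
    rw [hcompl, add_zero] at h1
    rw [h1]
    exact measure_univ
  exact ⟨C, ⟨hCcomp, hpr, hCΩ, hθC⟩, φ, hφ, hconv⟩
end
end
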